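/- arXiv:2511.01557 — 9 statements merged into one kernel-verified Lean document; each statement's English description precedes it below -/
import Mathlib

section
/- Let x be a real number with 0 ≤ x ≤ 1/2. Then the infinite product ∏_{i=1}^∞ (1 − x^i) satisfies ∏_{i=1}^∞ (1 − x^i) ≥ (1 − x)(1 − x² − x³ − x⁴). -/
-- Weierstrass: ∏ (1 - a i) ≥ 1 - ∑ a i  for 0 ≤ a i ≤ 1
lemma aux_prod_one_sub (a : ℕ → ℝ) (h0 : ∀ i, 0 ≤ a i) (h1 : ∀ i, a i ≤ 1) (n : ℕ) :
    1 - ∑ i ∈ Finset.range n, a i ≤ ∏ i ∈ Finset.range n, (1 - a i) := by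
  induction n with
  | zero => simp
  | succ n ih =>
    rw [Finset.prod_range_succ, Finset.sum_range_succ]
    have hp : 0 ≤ ∏ i ∈ Finset.range n, (1 - a i) :=
      Finset.prod_nonneg fun i _ => by linarith [h1 i]
    have hps : ∏ i ∈ Finset.range n, (1 - a i) ≤ 1 :=
      Finset.prod_le_one (fun i _ => by linarith [h1 i]) (fun i _ => by linarith [h0 i])
    nlinarith [h0 n, h1 n]

/-- For a real number `x` with `0 ≤ x ≤ 1/2`, the infinite product
`∏_{i=1}^∞ (1 - x^i)` is at least `(1 - x)(1 - x² - x³ - x⁴)`. -/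
theorem tprod_one_sub_pow_ge (x : ℝ) (hx0 : 0 ≤ x) (hx : x ≤ 1 / 2) :
    (1 - x) * (1 - x ^ 2 - x ^ 3 - x ^ 4) ≤ ∏' i : ℕ, (1 - x ^ (i + 1)) := by
  have hxlt : x < 1 := by linarith
  have hpow : ∀ i : ℕ, x ^ (i + 1) ≤ 1 / 2 := fun i => by
    calc x ^ (i + 1) ≤ x ^ 1 := pow_le_pow_of_le_one hx0 hxlt.le (by omega)
    _ = x := pow_one x
    _ ≤ 1 / 2 := hx
  have hpow0 : ∀ i : ℕ, 0 ≤ x ^ (i + 1) := fun i => pow_nonneg hx0 _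
  have hpos : ∀ i : ℕ, (0:ℝ) < 1 - x ^ (i + 1) := fun i => by linarith [hpow i]
  -- summability of logs
  have hlog : Summable fun i : ℕ => Real.log (1 - x ^ (i + 1)) := by
    apply Summable.of_norm_bounded (g := fun i => 2 * x ^ (i + 1))
    · exact ((summable_geometric_of_lt_one hx0 hxlt).mul_left 2).comp_injective
        (add_left_injective 1)
    · intro i
      have ht := hpow i; have ht0 := hpow0 i
      have hlogle : Real.log (1 - x ^ (i + 1)) ≤ 0 :=
        Real.log_nonpos (by linarith) (by linarith)
      rw [Real.norm_eq_abs, abs_of_nonpos hlogle]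
      have : -Real.log (1 - x ^ (i + 1)) = Real.log (1 - x ^ (i + 1))⁻¹ :=
        (Real.log_inv _).symm
      rw [this]
      have h2 : Real.log (1 - x ^ (i + 1))⁻¹ ≤ (1 - x ^ (i + 1))⁻¹ - 1 :=
        Real.log_le_sub_one_of_pos (inv_pos.mpr (hpos i))
      have h3 : (1 - x ^ (i + 1))⁻¹ - 1 ≤ 2 * x ^ (i + 1) := by
        have h4 : (1 - x ^ (i + 1))⁻¹ ≤ 1 + 2 * x ^ (i + 1) := by
          rw [inv_le_iff_one_le_mul₀ (hpos i)]
          nlinarith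
        linarith
      linarith
  have hm : Multipliable fun i : ℕ => (1 - x ^ (i + 1)) := by
    have := Real.multipliable_of_summable_log hpos hlog
    exact this
  have key : ∀ n : ℕ, (1 - x) * (1 - x ^ 2 - x ^ 3 - x ^ 4) ≤
      ∏ i ∈ Finset.range n, (1 - x ^ (i + 1)) := by
    intro n
    have k2 : x ^ 2 ≤ (1/2:ℝ) ^ 2 := pow_le_pow_left₀ hx0 hx 2
    have k3 : x ^ 3 ≤ (1/2:ℝ) ^ 3 := pow_le_pow_left₀ hx0 hx 3
    have k4 : x ^ 4 ≤ (1/2:ℝ) ^ 4 := pow_le_pow_left₀ hx0 hx 4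
    have p2 : (0:ℝ) ≤ x ^ 2 := pow_nonneg hx0 2
    have p3 : (0:ℝ) ≤ x ^ 3 := pow_nonneg hx0 3
    have p4 : (0:ℝ) ≤ x ^ 4 := pow_nonneg hx0 4
    have f1 : (0:ℝ) ≤ 1 - x := by linarith
    have f2 : (0:ℝ) ≤ 1 - x ^ 2 := by linarith
    have f3 : (0:ℝ) ≤ 1 - x ^ 3 := by linarith
    have fb : (0:ℝ) ≤ 1 - x ^ 2 - x ^ 3 - x ^ 4 := by linarith
    match n with
    | 0 => simp; nlinarith
    | 1 =>
      rw [Finset.prod_range_one]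
      simp only [zero_add, pow_one]
      nlinarith [mul_nonneg f1 (by linarith : (0:ℝ) ≤ x ^ 2 + x ^ 3 + x ^ 4)]
    | 2 =>
      rw [Finset.prod_range_succ, Finset.prod_range_one]
      norm_num
      nlinarith [mul_nonneg f1 (by linarith : (0:ℝ) ≤ x ^ 3 + x ^ 4)]
    | m + 3 =>
      rw [add_comm m 3, Finset.prod_range_add]
      have h3 : ∏ i ∈ Finset.range 3, (1 - x ^ (i + 1))
          = (1 - x) * (1 - x ^ 2) * (1 - x ^ 3) := by
        simp [Finset.prod_range_succ]
      rw [h3]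
      set t := ∑ i ∈ Finset.range m, x ^ (3 + i + 1) with ht
      have ht0 : 0 ≤ t := Finset.sum_nonneg fun i _ => pow_nonneg hx0 _
      have htail : 1 - t ≤ ∏ i ∈ Finset.range m, (1 - x ^ (3 + i + 1)) :=
        aux_prod_one_sub (fun i => x ^ (3 + i + 1)) (fun i => pow_nonneg hx0 _)
          (fun i => by have := hpow (3 + i); linarith) m
      have hts : t = x ^ 4 * ∑ i ∈ Finset.range m, x ^ i := by
        rw [ht, Finset.mul_sum]
        exact Finset.sum_congr rfl fun i _ => by rw [← pow_add]; ring_nf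
      have hgeom : (∑ i ∈ Finset.range m, x ^ i) * (1 - x) = 1 - x ^ m := by
        have := geom_sum_mul x m; nlinarith [this]
      have htb : t * (1 - x) ≤ x ^ 4 := by
        rw [hts, mul_assoc, hgeom]
        nlinarith [pow_nonneg hx0 m, pow_nonneg hx0 4]
      have hc0 : 0 ≤ (1 - x) * (1 - x ^ 2) * (1 - x ^ 3) := mul_nonneg (mul_nonneg f1 f2) f3
      have step1 : (1 - x) * (1 - x ^ 2) * (1 - x ^ 3) * (1 - t) ≤
          (1 - x) * (1 - x ^ 2) * (1 - x ^ 3) * ∏ i ∈ Finset.range m, (1 - x ^ (3 + i + 1)) :=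
        mul_le_mul_of_nonneg_left htail hc0
      have step2 : (1 - x) * (1 - x ^ 2 - x ^ 3 - x ^ 4) ≤
          (1 - x) * (1 - x ^ 2) * (1 - x ^ 3) * (1 - t) := by
        have e1 : (1 - x) * (1 - x ^ 2) * (1 - x ^ 3) * (1 - t)
            = (1 - x ^ 2) * (1 - x ^ 3) * ((1 - x) - t * (1 - x)) := by ring
        have e2 : (0:ℝ) ≤ (1 - x ^ 2) * (1 - x ^ 3) := mul_nonneg f2 f3
        have e3 : (1 - x ^ 2) * (1 - x ^ 3) * ((1 - x) - x ^ 4) ≤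
            (1 - x ^ 2) * (1 - x ^ 3) * ((1 - x) - t * (1 - x)) :=
          mul_le_mul_of_nonneg_left (by linarith) e2
        have e4 : (1 - x) * (1 - x ^ 2 - x ^ 3 - x ^ 4) ≤
            (1 - x ^ 2) * (1 - x ^ 3) * ((1 - x) - x ^ 4) := by
          nlinarith [pow_nonneg hx0 7, pow_le_pow_of_le_one hx0 hxlt.le (by norm_num : 7 ≤ 9)]
        rw [e1]; linarith
      linarith
  exact ge_of_tendsto' hm.hasProd.tendsto_prod_nat key
end

section
/- Let x be a real number with 0 ≤ x ≤ 1/2 and let n be a natural number. Then the finite product satisfies ∏_{i=1}^n (1 − x^i) ≥ (1 − x)(1 − x² − x³ − x⁴). -/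
/-- Weierstrass-type inequality: the product of `1 - x^i` over `Icc 5 n` is at least
`1` minus the sum of the `x^i`. -/
lemma aux_prod_ge (x : ℝ) (hx0 : 0 ≤ x) (hx1 : x ≤ 1) (n : ℕ) :
    1 - ∑ i ∈ Finset.Icc 5 n, x ^ i ≤ ∏ i ∈ Finset.Icc 5 n, (1 - x ^ i) := by
  induction n with
  | zero => simp
  | succ n ih =>
      by_cases h : 5 ≤ n + 1
      · rw [Finset.sum_Icc_succ_top h, Finset.prod_Icc_succ_top h]
        have hp : 0 ≤ x ^ (n + 1) := pow_nonneg hx0 _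
        have hp1 : x ^ (n + 1) ≤ 1 := pow_le_one₀ hx0 hx1
        have hs : 0 ≤ ∑ i ∈ Finset.Icc 5 n, x ^ i :=
          Finset.sum_nonneg fun i _ => pow_nonneg hx0 _
        nlinarith [mul_le_mul_of_nonneg_right ih (by linarith : (0:ℝ) ≤ 1 - x ^ (n + 1))]
      · rw [Finset.Icc_eq_empty (by omega)]
        simp

/-- Geometric sum formula over `Icc 5 n`. -/
lemma aux_sum_eq (x : ℝ) (hx1 : x < 1) (n : ℕ) (hn : 4 ≤ n) :
    ∑ i ∈ Finset.Icc 5 n, x ^ i = (x ^ 5 - x ^ (n + 1)) / (1 - x) := by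
  have hne : (1 : ℝ) - x ≠ 0 := by linarith
  induction n, hn using Nat.le_induction with
  | base => simp
  | succ n hn ih =>
      rw [Finset.sum_Icc_succ_top (by omega), ih]
      field_simp
      ring

/-- For a real number `x` with `0 ≤ x ≤ 1/2` and any `n : ℕ`,
`∏_{i=1}^n (1 - x^i) ≥ (1 - x)(1 - x² - x³ - x⁴)`. -/
theorem prod_one_sub_pow_ge (x : ℝ) (hx0 : 0 ≤ x) (hx : x ≤ 1 / 2) (n : ℕ) :
    (1 - x) * (1 - x ^ 2 - x ^ 3 - x ^ 4) ≤ ∏ i ∈ Finset.Icc 1 n, (1 - x ^ i) := by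
  have hx1 : x < 1 := by linarith
  have h2 : x ^ 2 ≤ (1/2 : ℝ) ^ 2 := pow_le_pow_left₀ hx0 hx 2
  have h3 : x ^ 3 ≤ (1/2 : ℝ) ^ 3 := pow_le_pow_left₀ hx0 hx 3
  have h4 : x ^ 4 ≤ (1/2 : ℝ) ^ 4 := pow_le_pow_left₀ hx0 hx 4
  have h5 : x ^ 5 ≤ (1/2 : ℝ) ^ 5 := pow_le_pow_left₀ hx0 hx 5
  have p2 : (0:ℝ) ≤ x ^ 2 := pow_nonneg hx0 2
  have p3 : (0:ℝ) ≤ x ^ 3 := pow_nonneg hx0 3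
  have p4 : (0:ℝ) ≤ x ^ 4 := pow_nonneg hx0 4
  have p5 : (0:ℝ) ≤ x ^ 5 := pow_nonneg hx0 5
  have p7 : (0:ℝ) ≤ x ^ 7 := pow_nonneg hx0 7
  have hq0 : (0:ℝ) ≤ 1 - x ^ 2 - x ^ 3 - x ^ 4 := by norm_num at h2 h3 h4; linarith
  have hq1 : 1 - x ^ 2 - x ^ 3 - x ^ 4 ≤ 1 := by linarith
  have h1x : (0:ℝ) ≤ 1 - x := by linarith
  have h97 : x ^ 9 ≤ x ^ 7 := pow_le_pow_of_le_one hx0 hx1.le (by norm_num)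
  have p9 : (0:ℝ) ≤ x ^ 9 := pow_nonneg hx0 9
  match n with
  | 0 =>
      simp only [Finset.Icc_eq_empty (by omega : ¬ (1:ℕ) ≤ 0), Finset.prod_empty]
      nlinarith
  | 1 =>
      have he : Finset.Icc 1 1 = {1} := rfl
      rw [he, Finset.prod_singleton, pow_one]
      nlinarith
  | 2 =>
      have he : Finset.Icc 1 2 = {1, 2} := rfl
      rw [he, Finset.prod_insert (by decide), Finset.prod_singleton, pow_one]
      nlinarith
  | 3 =>
      have he : Finset.Icc 1 3 = {1, 2, 3} := rfl
      rw [he, Finset.prod_insert (by decide), Finset.prod_insert (by decide),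
        Finset.prod_singleton, pow_one]
      nlinarith
  | 4 =>
      have he : Finset.Icc 1 4 = {1, 2, 3, 4} := rfl
      rw [he, Finset.prod_insert (by decide), Finset.prod_insert (by decide),
        Finset.prod_insert (by decide), Finset.prod_singleton, pow_one]
      nlinarith
  | (n + 5) =>
      have hsplit : Finset.Icc 1 (n + 5) = Finset.Icc 1 4 ∪ Finset.Icc 5 (n + 5) := by
        ext i; simp only [Finset.mem_Icc, Finset.mem_union]; omega
      have hdisj : Disjoint (Finset.Icc 1 4) (Finset.Icc 5 (n + 5)) := by
        simp only [Finset.disjoint_left, Finset.mem_Icc]; omega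
      have h14 : Finset.Icc 1 4 = {1, 2, 3, 4} := rfl
      have hprod14 : ∏ i ∈ Finset.Icc 1 4, (1 - x ^ i)
          = (1 - x) * (1 - x ^ 2) * (1 - x ^ 3) * (1 - x ^ 4) := by
        rw [h14, Finset.prod_insert (by decide), Finset.prod_insert (by decide),
          Finset.prod_insert (by decide), Finset.prod_singleton, pow_one]
        ring
      have hxp : (0:ℝ) < 1 - x := by linarith
      have hsum : ∑ i ∈ Finset.Icc 5 (n + 5), x ^ i ≤ x ^ 5 / (1 - x) := by
        rw [aux_sum_eq x hx1 _ (by omega), div_le_div_iff₀ hxp hxp]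
        nlinarith [pow_nonneg hx0 (n + 5 + 1)]
      have htail : 1 - x ^ 5 / (1 - x) ≤ ∏ i ∈ Finset.Icc 5 (n + 5), (1 - x ^ i) := by
        have := aux_prod_ge x hx0 hx1.le (n + 5)
        linarith
      have hc : 0 ≤ ∏ i ∈ Finset.Icc 1 4, (1 - x ^ i) := by
        rw [hprod14]
        have hh2 : x ^ 2 ≤ 1 := pow_le_one₀ hx0 hx1.le
        have hh3 : x ^ 3 ≤ 1 := pow_le_one₀ hx0 hx1.le
        have hh4 : x ^ 4 ≤ 1 := pow_le_one₀ hx0 hx1.le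
        apply mul_nonneg (mul_nonneg (mul_nonneg h1x (by linarith)) (by linarith)) (by linarith)
      have key : (∏ i ∈ Finset.Icc 1 4, (1 - x ^ i)) * (1 - x ^ 5 / (1 - x))
          ≤ ∏ i ∈ Finset.Icc 1 (n + 5), (1 - x ^ i) := by
        rw [hsplit, Finset.prod_union hdisj]
        exact mul_le_mul_of_nonneg_left htail hc
      refine le_trans ?_ key
      rw [hprod14]
      have hne : (1:ℝ) - x ≠ 0 := by linarith
      have hrw : (1 - x) * (1 - x ^ 2) * (1 - x ^ 3) * (1 - x ^ 4) * (1 - x ^ 5 / (1 - x))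
          = (1 - x) * (1 - x ^ 2 - x ^ 3 - x ^ 4)
            + x ^ 7 * (1 - x ^ 4 - x ^ 5 + x ^ 7) := by
        field_simp
        ring
      rw [hrw]
      have hpos : (0:ℝ) ≤ x ^ 7 * (1 - x ^ 4 - x ^ 5 + x ^ 7) := by
        apply mul_nonneg p7
        norm_num at h4 h5
        linarith
      linarith
end

section
/- Let q ≥ 2 and n ≥ 2 be natural numbers. Then q^(n²) · ∏_{i=1}^n (q^(2i) − 1) > (q² − 1)² · q^(2n² + n − 4). -/
lemma sp_key (q : ℕ) (hq : 2 ≤ q) :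
    ∀ n, 1 ≤ n → (q ^ (2 * n) * (q ^ 2 - 2) + 1) * q ^ (n ^ 2 - n) ≤
      (q ^ 2 - 1) * ∏ i ∈ Finset.Icc 1 n, (q ^ (2 * i) - 1) := by
  have hq2 : 4 ≤ q ^ 2 := by nlinarith
  intro n hn
  induction n, hn using Nat.le_induction with
  | base =>
      simp only [Finset.Icc_self, Finset.prod_singleton]
      obtain ⟨a, ha⟩ : ∃ a, q ^ 2 = a + 2 := ⟨q ^ 2 - 2, by omega⟩
      have h1 : q ^ (2 * 1) = a + 2 := by rw [show 2 * 1 = 2 from rfl, ha]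
      rw [h1]
      rw [show (1:ℕ) ^ 2 - 1 = 0 from rfl, pow_zero,
        show a + 2 - 2 = a from by omega, show a + 2 - 1 = a + 1 from by omega]
      nlinarith
  | succ n hn ih =>
      rw [Finset.prod_Icc_succ_top (by omega : 1 ≤ n + 1)]
      obtain ⟨a, ha⟩ : ∃ a, q ^ 2 = a + 2 := ⟨q ^ 2 - 2, by omega⟩
      have ha2 : 2 ≤ a := by omega
      have hs1 : q ^ 2 - 1 = a + 1 := by omega
      have hs2 : q ^ 2 - 2 = a := by omega
      have hb : 1 ≤ q ^ (2 * n) := Nat.one_le_pow _ _ (by omega)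
      set b := q ^ (2 * n) with hbdef
      have epow : q ^ ((n + 1) ^ 2 - (n + 1)) = q ^ (n ^ 2 - n) * b := by
        rw [hbdef, ← pow_add]
        congr 1
        have hnn : n ≤ n ^ 2 := Nat.le_self_pow two_ne_zero n
        have h1 : (n + 1) ^ 2 = n ^ 2 + 2 * n + 1 := by ring
        omega
      have hfac : q ^ (2 * (n + 1)) = b * (a + 2) := by
        rw [hbdef, ← ha, ← pow_add]
        congr 1
      obtain ⟨c, hc⟩ : ∃ c, b * (a + 2) = c + 1 := ⟨b * (a + 2) - 1,
        (Nat.succ_pred_eq_of_pos (Nat.mul_pos (by omega) (by omega))).symm⟩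
      have ih' : (b * a + 1) * q ^ (n ^ 2 - n) ≤
          (q ^ 2 - 1) * ∏ i ∈ Finset.Icc 1 n, (q ^ (2 * i) - 1) := by
        rw [← hs2]; exact ih
      calc (q ^ (2 * (n + 1)) * (q ^ 2 - 2) + 1) * q ^ ((n + 1) ^ 2 - (n + 1))
          = (((c + 1) * a + 1) * b) * q ^ (n ^ 2 - n) := by
            rw [hfac, epow, hs2, hc]; ring
        _ ≤ ((b * a + 1) * c) * q ^ (n ^ 2 - n) := by
            apply Nat.mul_le_mul_right
            nlinarith
        _ = c * ((b * a + 1) * q ^ (n ^ 2 - n)) := by ring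
        _ ≤ c * ((q ^ 2 - 1) * ∏ i ∈ Finset.Icc 1 n, (q ^ (2 * i) - 1)) :=
            Nat.mul_le_mul_left _ ih'
        _ = (q ^ 2 - 1) * ((∏ i ∈ Finset.Icc 1 n, (q ^ (2 * i) - 1)) * (q ^ (2 * (n + 1)) - 1)) := by
            rw [hfac, hc, Nat.add_sub_cancel]; ring

/-- Lemma 3.10 (|Sp_n|): for natural numbers `q ≥ 2` and `n ≥ 2`,
`q^(n²) * ∏_{i=1}^n (q^(2i) - 1) > (q² - 1)² * q^(2n² + n - 4)`; the left-hand side is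
the order of `Sp_{2n}(q) = SO_{2n+1}(q)`. -/
theorem card_symplectic_gt (q n : ℕ) (hq : 2 ≤ q) (hn : 2 ≤ n) :
    (q ^ 2 - 1) ^ 2 * q ^ (2 * n ^ 2 + n - 4) <
      q ^ (n ^ 2) * ∏ i ∈ Finset.Icc 1 n, (q ^ (2 * i) - 1) := by
  have hq2 : 4 ≤ q ^ 2 := by nlinarith
  have key := sp_key q hq n (by omega)
  have hnn : n ≤ n ^ 2 := Nat.le_self_pow two_ne_zero n
  apply Nat.lt_of_mul_lt_mul_left (a := q ^ 2 - 1)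
  have e1 : 2 * n ^ 2 + n - 4 = (n ^ 2 + (n ^ 2 - n)) + (2 * n - 4) := by omega
  have e2 : 2 * n = (2 * n - 4) + 4 := by omega
  have hA : 0 < q ^ (n ^ 2) := Nat.pow_pos (by omega)
  have hB : 0 < q ^ (n ^ 2 - n) := Nat.pow_pos (by omega)
  obtain ⟨a, ha⟩ : ∃ a, q ^ 2 = a + 2 := ⟨q ^ 2 - 2, by omega⟩
  have ha2 : 2 ≤ a := by omega
  have fact : (q ^ 2 - 1) ^ 3 ≤ q ^ 4 * (q ^ 2 - 2) := by
    have h4 : q ^ 4 = (a + 2) ^ 2 := by rw [show (4:ℕ) = 2*2 from rfl, pow_mul, ha]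
    rw [ha, h4]
    have : a + 2 - 1 = a + 1 := by omega
    have : a + 2 - 2 = a := by omega
    rw [show a + 2 - 1 = a + 1 from by omega, show a + 2 - 2 = a from by omega]
    nlinarith
  calc (q ^ 2 - 1) * ((q ^ 2 - 1) ^ 2 * q ^ (2 * n ^ 2 + n - 4))
      = (q ^ 2 - 1) ^ 3 * (q ^ (n ^ 2) * q ^ (n ^ 2 - n) * q ^ (2 * n - 4)) := by
        rw [e1, pow_add, pow_add]; ring
    _ ≤ (q ^ 4 * (q ^ 2 - 2)) * (q ^ (n ^ 2) * q ^ (n ^ 2 - n) * q ^ (2 * n - 4)) :=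
        Nat.mul_le_mul_right _ fact
    _ < (q ^ 4 * (q ^ 2 - 2)) * (q ^ (n ^ 2) * q ^ (n ^ 2 - n) * q ^ (2 * n - 4))
          + q ^ (n ^ 2) * q ^ (n ^ 2 - n) := by
        exact Nat.lt_add_of_pos_right (Nat.mul_pos hA hB)
    _ = q ^ (n ^ 2) * ((q ^ (2 * n) * (q ^ 2 - 2) + 1) * q ^ (n ^ 2 - n)) := by
        have hpow : q ^ (2 * n) = q ^ (2 * n - 4) * q ^ 4 := by
          rw [← pow_add]; congr 1
        rw [hpow]; ring
    _ ≤ q ^ (n ^ 2) * ((q ^ 2 - 1) * ∏ i ∈ Finset.Icc 1 n, (q ^ (2 * i) - 1)) :=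
        Nat.mul_le_mul_left _ key
    _ = (q ^ 2 - 1) * (q ^ (n ^ 2) * ∏ i ∈ Finset.Icc 1 n, (q ^ (2 * i) - 1)) := by ring
end

section
/- Let q ≥ 2, e ≥ 1 and a ≥ 1 be natural numbers and let r be a natural number with 0 ≤ r < e. Assume q^e ≥ 4 and set n = a·e + r; assume n ≥ 2. Then (q^e − 1)^a · (2e)^a · a! · q^(r²) · ∏_{i=1}^r (q^(2i) − 1) ≥ 2^a · q^n. (The left-hand side is the order of the normaliser of a Sylow d-torus in Sp_{2n}(q), whose last factor q^(r²)·∏_{i=1}^r (q^(2i) − 1) is the order of Sp_{2r}(q).) -/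
lemma aux_four_pow_le (a : ℕ) (ha : 2 ≤ a) : 4 ^ a ≤ 3 ^ a * a.factorial := by
  induction a with
  | zero => omega
  | succ b ih =>
    rcases Nat.lt_or_ge b 2 with hb | hb
    · interval_cases b
      · omega
      · norm_num [Nat.factorial]
    · have h := ih hb
      calc 4 ^ (b + 1) = 4 * 4 ^ b := by ring
        _ ≤ 4 * (3 ^ b * b.factorial) := by
            exact Nat.mul_le_mul_left _ h
        _ ≤ (3 * (b + 1)) * (3 ^ b * b.factorial) := by
            exact Nat.mul_le_mul_right _ (by omega)
        _ = 3 ^ (b + 1) * (b + 1).factorial := by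
            rw [Nat.factorial_succ]; ring

/-- Lemma 3.11 (N in Sp): for natural numbers `q ≥ 2`, `e ≥ 1`, `a ≥ 1`, `0 ≤ r < e`,
with `q^e ≥ 4` and `n = a·e + r ≥ 2`, the order
`(q^e - 1)^a * (2e)^a * a! * q^(r²) * ∏_{i=1}^r (q^(2i) - 1)` of the normaliser of a Sylow
`d`-torus in `Sp_{2n}(q)` is at least `2^a * q^n`. -/
theorem sylow_torus_normaliser_card_ge_symplectic (q e a r n : ℕ)
    (hq : 2 ≤ q) (he : 1 ≤ e) (ha : 1 ≤ a) (hr : r < e)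
    (hqe : 4 ≤ q ^ e) (hn : n = a * e + r) (hn2 : 2 ≤ n) :
    2 ^ a * q ^ n ≤
      (q ^ e - 1) ^ a * (2 * e) ^ a * a.factorial * q ^ (r ^ 2) *
        ∏ i ∈ Finset.Icc 1 r, (q ^ (2 * i) - 1) := by
  subst hn
  have hprod : 1 ≤ ∏ i ∈ Finset.Icc 1 r, (q ^ (2 * i) - 1) := by
    apply Finset.one_le_prod'
    intro i hi
    have hi1 : 1 ≤ i := (Finset.mem_Icc.mp hi).1
    have : 2 ≤ q ^ (2 * i) := by
      calc 2 ≤ q := hq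
        _ = q ^ 1 := (pow_one q).symm
        _ ≤ q ^ (2 * i) := Nat.pow_le_pow_right (by omega) (by omega)
    omega
  rcases Nat.lt_or_ge e 2 with he1 | he2
  · -- e = 1, hence r = 0
    have he' : e = 1 := by omega
    have hr0 : r = 0 := by omega
    subst he' hr0
    simp only [pow_one, pow_zero, mul_one, Nat.mul_one, Nat.add_zero] at *
    have ha2 : 2 ≤ a := hn2
    have hq4 : 4 ≤ q := hqe
    have h1 : 3 ^ a * q ^ a ≤ 3 ^ a * ((q - 1) ^ a * a.factorial) := by
      calc 3 ^ a * q ^ a = (3 * q) ^ a := (mul_pow 3 q a).symm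
        _ ≤ (4 * (q - 1)) ^ a := Nat.pow_le_pow_left (by omega) a
        _ = 4 ^ a * (q - 1) ^ a := mul_pow 4 (q - 1) a
        _ ≤ (3 ^ a * a.factorial) * (q - 1) ^ a :=
            Nat.mul_le_mul_right _ (aux_four_pow_le a ha2)
        _ = 3 ^ a * ((q - 1) ^ a * a.factorial) := by ring
    have h2 : q ^ a ≤ (q - 1) ^ a * a.factorial :=
      Nat.le_of_mul_le_mul_left h1 (Nat.pow_pos (n := a) (by norm_num))
    calc 2 ^ a * q ^ a ≤ 2 ^ a * ((q - 1) ^ a * a.factorial) :=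
          Nat.mul_le_mul_left _ h2
      _ = (q - 1) ^ a * 2 ^ a * a.factorial * q ^ (0 ^ 2) *
            ∏ i ∈ Finset.Icc 1 0, (q ^ (2 * i) - 1) := by simp; ring
  · -- e ≥ 2
    have key : 2 * q ^ e ≤ (q ^ e - 1) * (2 * e) := by
      have h4 : (q ^ e - 1) * 4 ≤ (q ^ e - 1) * (2 * e) :=
        Nat.mul_le_mul_left _ (by omega)
      omega
    have hqr : q ^ r ≤ a.factorial * (q ^ (r ^ 2) *
        ∏ i ∈ Finset.Icc 1 r, (q ^ (2 * i) - 1)) := by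
      have h1 : q ^ r ≤ q ^ (r ^ 2) :=
        Nat.pow_le_pow_right (by omega) (by nlinarith)
      calc q ^ r ≤ q ^ (r ^ 2) := h1
        _ = 1 * (q ^ (r ^ 2) * 1) := by ring
        _ ≤ a.factorial * (q ^ (r ^ 2) *
            ∏ i ∈ Finset.Icc 1 r, (q ^ (2 * i) - 1)) := by
          apply Nat.mul_le_mul a.factorial_pos
          exact Nat.mul_le_mul_left _ hprod
    calc 2 ^ a * q ^ (a * e + r) = (2 * q ^ e) ^ a * q ^ r := by
          rw [pow_add, pow_mul', mul_pow]; ring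
      _ ≤ ((q ^ e - 1) * (2 * e)) ^ a * q ^ r :=
          Nat.mul_le_mul_right _ (Nat.pow_le_pow_left key a)
      _ ≤ ((q ^ e - 1) * (2 * e)) ^ a * (a.factorial * (q ^ (r ^ 2) *
            ∏ i ∈ Finset.Icc 1 r, (q ^ (2 * i) - 1))) :=
          Nat.mul_le_mul_left _ hqr
      _ = (q ^ e - 1) ^ a * (2 * e) ^ a * a.factorial * q ^ (r ^ 2) *
            ∏ i ∈ Finset.Icc 1 r, (q ^ (2 * i) - 1) := by ring
end

section
/- Let q ≥ 2 and n ≥ 4 be natural numbers. Then 2 · q^(n(n−1)) · (q^n − 1) · ∏_{i=1}^{n−1} (q^(2i) − 1) > q^(2n² − n). -/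
open Finset

/-- Weierstrass: `∏ (1 - f i) ≥ 1 - ∑ f i`. -/
lemma weier_aux (s : Finset ℕ) (f : ℕ → ℝ) (h0 : ∀ i ∈ s, 0 ≤ f i) (h1 : ∀ i ∈ s, f i ≤ 1) :
    1 - ∑ i ∈ s, f i ≤ ∏ i ∈ s, (1 - f i) := by
  induction s using Finset.cons_induction with
  | empty => simp
  | cons a s ha ih =>
    rw [Finset.sum_cons, Finset.prod_cons]
    have hrec := ih (fun i hi => h0 i (Finset.mem_cons_of_mem hi))
      (fun i hi => h1 i (Finset.mem_cons_of_mem hi))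
    have hf0 : 0 ≤ f a := h0 a (Finset.mem_cons_self a s)
    have hf1 : f a ≤ 1 := h1 a (Finset.mem_cons_self a s)
    have hsum : 0 ≤ ∑ i ∈ s, f i :=
      Finset.sum_nonneg (fun i hi => h0 i (Finset.mem_cons_of_mem hi))
    nlinarith [mul_le_mul_of_nonneg_left hrec (by linarith : (0:ℝ) ≤ 1 - f a)]

lemma geo_aux : ∀ m : ℕ, (∑ i ∈ Finset.Icc 1 m, ((1:ℝ)/4)^i) ≤ 1/3 - 1/3*(1/4)^m := by
  intro m
  induction m with
  | zero => simp
  | succ m ih =>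
    rw [Finset.sum_Icc_succ_top (by omega)]
    have h : ((1:ℝ)/4)^(m+1) = (1/4)*(1/4)^m := by ring
    rw [h]
    linarith

lemma sum2i_aux : ∀ m : ℕ, (∑ i ∈ Finset.Icc 1 m, 2*i) = m*(m+1) := by
  intro m
  induction m with
  | zero => simp
  | succ m ih =>
    rw [Finset.sum_Icc_succ_top (by omega), ih]
    ring

/-- Lemma 3.17 (|SO_2n|): for `q ≥ 2` and `n ≥ 4`,
`2 * q^(n(n-1)) * (q^n - 1) * ∏_{i=1}^{n-1} (q^(2i) - 1) > q^(2n² - n)`, expressing that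
the order of `SO_{2n}^±(q)` exceeds `(1/2) q^(2n² - n)`. -/
theorem card_even_orthogonal_gt (q n : ℕ) (hq : 2 ≤ q) (hn : 4 ≤ n) :
    q ^ (2 * n ^ 2 - n) <
      2 * (q ^ (n * (n - 1)) * (q ^ n - 1) * ∏ i ∈ Finset.Icc 1 (n - 1), (q ^ (2 * i) - 1)) := by
  obtain ⟨m, rfl⟩ : ∃ m, n = m + 1 := ⟨n - 1, by omega⟩
  have hm : 3 ≤ m := by omega
  set r : ℝ := (q : ℝ) with hrdef
  have hr2 : (2:ℝ) ≤ r := by rw [hrdef]; exact_mod_cast hq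
  have hr0 : (0:ℝ) < r := by linarith
  have h1 : ∀ k : ℕ, ((q^k - 1 : ℕ) : ℝ) = r^k - 1 := by
    intro k
    rw [Nat.cast_sub (Nat.one_le_pow _ _ (by omega))]
    push_cast; ring
  rw [← Nat.cast_lt (α := ℝ)]
  push_cast [h1]
  rw [← hrdef]
  -- rewrite the exponent on the left
  have hexp : 2 * (m+1)^2 - (m+1) = m*(m+1) + (m+1) + m*(m+1) := by
    have h : 2*(m+1)^2 = (m*(m+1) + (m+1) + m*(m+1)) + (m+1) := by ring
    rw [h, Nat.add_sub_cancel]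
  rw [hexp, pow_add, pow_add, Nat.mul_comm (m+1) m]
  -- basic bounds
  have hinv : r⁻¹ ≤ 1/2 := by
    rw [show (1:ℝ)/2 = 2⁻¹ by norm_num]
    exact inv_anti₀ (by norm_num) hr2
  have hinv0 : (0:ℝ) ≤ r⁻¹ := inv_nonneg.2 hr0.le
  have hfact : ∀ i : ℕ, r^(2*i) - 1 = r^(2*i) * (1 - r⁻¹^(2*i)) := by
    intro i
    have hh : r^(2*i) * r⁻¹^(2*i) = 1 := by
      rw [← mul_pow, mul_inv_cancel₀ (ne_of_gt hr0), one_pow]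
    rw [mul_sub, mul_one, hh]
  have hprodeq : (∏ i ∈ Finset.Icc 1 m, (r^(2*i) - 1))
      = r^(m*(m+1)) * ∏ i ∈ Finset.Icc 1 m, (1 - r⁻¹^(2*i)) := by
    rw [← sum2i_aux m, ← Finset.prod_pow_eq_pow_sum, ← Finset.prod_mul_distrib]
    exact Finset.prod_congr rfl fun i _ => hfact i
  have hb : ∑ i ∈ Finset.Icc 1 m, r⁻¹^(2*i) ≤ 1/3 := by
    calc ∑ i ∈ Finset.Icc 1 m, r⁻¹^(2*i) ≤ ∑ i ∈ Finset.Icc 1 m, ((1:ℝ)/4)^i := by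
          apply Finset.sum_le_sum
          intro i _
          rw [pow_mul]
          apply pow_le_pow_left₀ (by positivity)
          nlinarith
      _ ≤ 1/3 - 1/3*(1/4)^m := geo_aux m
      _ ≤ 1/3 := by nlinarith [pow_nonneg (by norm_num : (0:ℝ) ≤ 1/4) m]
  have hW : (2:ℝ)/3 ≤ ∏ i ∈ Finset.Icc 1 m, (1 - r⁻¹^(2*i)) := by
    have hw := weier_aux (Finset.Icc 1 m) (fun i => r⁻¹^(2*i))
      (fun i _ => by positivity)
      (fun i _ => pow_le_one₀ hinv0 (by linarith))
    beta_reduce at hw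
    linarith
  have hB : (15/16) * r^(m+1) ≤ r^(m+1) - 1 := by
    have h1' : r⁻¹^(m+1) ≤ (1/2:ℝ)^(m+1) := pow_le_pow_left₀ hinv0 hinv _
    have h2' : ((1:ℝ)/2)^(m+1) ≤ (1/2:ℝ)^4 :=
      pow_le_pow_of_le_one (by norm_num) (by norm_num) (by omega)
    have h3' : r^(m+1) * r⁻¹^(m+1) = 1 := by
      rw [← mul_pow, mul_inv_cancel₀ (ne_of_gt hr0), one_pow]
    nlinarith [mul_le_mul_of_nonneg_left (h1'.trans h2') (pow_pos hr0 (m+1)).le]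
  rw [hprodeq]
  have hP : (0:ℝ) < r^(m*(m+1)) := pow_pos hr0 _
  have hQ : (0:ℝ) < r^(m+1) := pow_pos hr0 _
  set P := r^(m*(m+1)) with hPdef
  set Q := r^(m+1) with hQdef
  set W := ∏ i ∈ Finset.Icc 1 m, (1 - r⁻¹^(2*i)) with hWdef
  -- goal: P * Q * P < 2 * (P * (Q - 1) * (P * W))
  have m1 : P * ((15/16)*Q) ≤ P * (Q - 1) := by nlinarith
  have m2 : P * (2/3) ≤ P * W := by nlinarith
  have hstep : 2 * (P * ((15/16)*Q) * (P * (2/3))) ≤ 2 * (P * (Q - 1) * (P * W)) := by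
    have := mul_le_mul m1 m2 (by positivity) (by nlinarith : (0:ℝ) ≤ P * (Q - 1))
    linarith
  nlinarith [mul_pos (mul_pos hP hQ) hP]
end

section
/- Let q ≥ 2, e ≥ 1 and a ≥ 1 be natural numbers and let r be a natural number with 0 ≤ r ≤ e. Assume q^e ≥ 4 and set n = a·e + r; assume n ≥ 4. Let T = q^(r(r−1)) · (q^r − 1) · ∏_{i=1}^{r−1} (q^(2i) − 1) if r ≥ 1, and T = 1 if r = 0. Then (q^e − 1)^a · (2e)^a · a! · T ≥ 2^(a−1) · q^n. (Since the normaliser of a Sylow torus in SO_{2n}^±(q) has order (q^e ∓ 1)^a · (2e)^a · a!/2 · T, this expresses that this order is at least 2^(a−2) · q^n.) -/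
private lemma aux1 (a : ℕ) (ha : 1 ≤ a) : 8 ^ a ≤ 2 * (6 ^ a * a.factorial) := by
  induction a, ha using Nat.le_induction with
  | base => norm_num
  | succ n hn ih =>
    have h8 : 8 ≤ 6 * (n + 1) := by omega
    calc 8 ^ (n + 1) = 8 * 8 ^ n := by ring
      _ ≤ (6 * (n + 1)) * (2 * (6 ^ n * n.factorial)) := Nat.mul_le_mul h8 ih
      _ = 2 * (6 ^ (n + 1) * (n + 1).factorial) := by rw [Nat.factorial_succ]; ring

private lemma aux2 (a : ℕ) (ha : 2 ≤ a) : 8 ^ a ≤ 6 ^ a * a.factorial := by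
  induction a, ha using Nat.le_induction with
  | base => norm_num
  | succ n hn ih =>
    have h8 : 8 ≤ 6 * (n + 1) := by omega
    calc 8 ^ (n + 1) = 8 * 8 ^ n := by ring
      _ ≤ (6 * (n + 1)) * (6 ^ n * n.factorial) := Nat.mul_le_mul h8 ih
      _ = 6 ^ (n + 1) * (n + 1).factorial := by rw [Nat.factorial_succ]; ring

private lemma core (X e a k : ℕ) (hX : 4 ≤ X)
    (hkey : 8 ^ a ≤ k * ((6 * e) ^ a * a.factorial)) :
    2 ^ a * X ^ a ≤ k * ((X - 1) ^ a * (2 * e) ^ a * a.factorial) := by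
  have h34 : 3 * X ≤ 4 * (X - 1) := by omega
  have hp : (3 * X) ^ a ≤ (4 * (X - 1)) ^ a := Nat.pow_le_pow_left h34 a
  have hmul : 4 ^ a * (2 ^ a * X ^ a) ≤
      4 ^ a * (k * ((X - 1) ^ a * (2 * e) ^ a * a.factorial)) := by
    calc 4 ^ a * (2 ^ a * X ^ a) = 8 ^ a * X ^ a := by
          rw [← Nat.mul_assoc, ← Nat.mul_pow]
      _ ≤ (k * ((6 * e) ^ a * a.factorial)) * X ^ a := Nat.mul_le_mul_right _ hkey
      _ = k * ((3 * X) ^ a * (2 * e) ^ a * a.factorial) := by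
          have hx : (3 * X) ^ a * (2 * e) ^ a = (6 * e) ^ a * X ^ a := by
            rw [← Nat.mul_pow, ← Nat.mul_pow]; congr 1; ring
          rw [hx]; ring
      _ ≤ k * ((4 * (X - 1)) ^ a * (2 * e) ^ a * a.factorial) := by
          exact Nat.mul_le_mul_left _ (Nat.mul_le_mul_right _ (Nat.mul_le_mul_right _ hp))
      _ = 4 ^ a * (k * ((X - 1) ^ a * (2 * e) ^ a * a.factorial)) := by
          rw [Nat.mul_pow]; ring
  exact Nat.le_of_mul_le_mul_left hmul (by positivity)

/-- Lemma 3.18 (N in SO): for `q ≥ 2`, `e ≥ 1`, `a ≥ 1`, `0 ≤ r ≤ e`, with `q^e ≥ 4` and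
`n = a·e + r ≥ 4`, and `T = |SO_{2r}^+(q)|` (with `T = 1` for `r = 0`),
`(q^e - 1)^a * (2e)^a * a! * T ≥ 2^(a-1) * q^n`. -/
theorem sylow_torus_normaliser_card_ge_orthogonal (q e a r n : ℕ)
    (hq : 2 ≤ q) (he : 1 ≤ e) (ha : 1 ≤ a) (hr : r ≤ e)
    (hqe : 4 ≤ q ^ e) (hn : n = a * e + r) (hn4 : 4 ≤ n) :
    2 ^ (a - 1) * q ^ n ≤
      (q ^ e - 1) ^ a * (2 * e) ^ a * a.factorial *
        (if r = 0 then 1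
          else q ^ (r * (r - 1)) * (q ^ r - 1) * ∏ i ∈ Finset.Icc 1 (r - 1), (q ^ (2 * i) - 1)) := by
  have hXa : q ^ (a * e) = (q ^ e) ^ a := by rw [Nat.mul_comm, pow_mul]
  have h2a : 2 * 2 ^ (a - 1) = 2 ^ a := by
    rw [← pow_succ']
    congr 1
    omega
  by_cases hr0 : r = 0
  · -- r = 0
    rw [if_pos hr0, Nat.mul_one]
    subst hr0
    have hn' : n = a * e := by omega
    have hkey : 8 ^ a ≤ 2 * ((6 * e) ^ a * a.factorial) := by
      refine (aux1 a ha).trans ?_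
      have h6 : 6 ^ a ≤ (6 * e) ^ a := Nat.pow_le_pow_left (by omega) a
      exact Nat.mul_le_mul_left _ (Nat.mul_le_mul_right _ h6)
    have hc := core (q ^ e) e a 2 hqe hkey
    have hmul : 2 * (2 ^ (a - 1) * q ^ n) ≤
        2 * ((q ^ e - 1) ^ a * (2 * e) ^ a * a.factorial) := by
      calc 2 * (2 ^ (a - 1) * q ^ n) = 2 ^ a * (q ^ e) ^ a := by
            rw [← Nat.mul_assoc, h2a, hn', hXa]
        _ ≤ 2 * ((q ^ e - 1) ^ a * (2 * e) ^ a * a.factorial) := hc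
    exact Nat.le_of_mul_le_mul_left hmul (by norm_num)
  · -- r ≥ 1
    rw [if_neg hr0]
    have hr1 : 1 ≤ r := by omega
    have hq2r : 2 ≤ q ^ r :=
      le_trans (by norm_num : (2:ℕ) ≤ 2 ^ 1)
        (le_trans (Nat.pow_le_pow_right (by norm_num) hr1) (Nat.pow_le_pow_left hq r))
    have hA : 1 ≤ q ^ (r * (r - 1)) := Nat.one_le_pow _ _ (by omega)
    have hC : 1 ≤ ∏ i ∈ Finset.Icc 1 (r - 1), (q ^ (2 * i) - 1) := by
      refine Finset.one_le_prod' fun i hi => ?_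
      have hi1 : 1 ≤ i := (Finset.mem_Icc.mp hi).1
      have h2i : 2 ≤ q ^ (2 * i) :=
        le_trans (by norm_num : (2:ℕ) ≤ 2 ^ 1)
          (le_trans (Nat.pow_le_pow_right (by norm_num) (by omega)) (Nat.pow_le_pow_left hq _))
      omega
    have hT : q ^ r ≤ 2 * (q ^ (r * (r - 1)) * (q ^ r - 1) *
        ∏ i ∈ Finset.Icc 1 (r - 1), (q ^ (2 * i) - 1)) := by
      calc q ^ r ≤ 2 * (q ^ r - 1) := by omega
        _ = 1 * (2 * (q ^ r - 1)) * 1 := by ring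
        _ ≤ q ^ (r * (r - 1)) * (2 * (q ^ r - 1)) *
            ∏ i ∈ Finset.Icc 1 (r - 1), (q ^ (2 * i) - 1) :=
            Nat.mul_le_mul (Nat.mul_le_mul_right _ hA) hC
        _ = 2 * (q ^ (r * (r - 1)) * (q ^ r - 1) *
            ∏ i ∈ Finset.Icc 1 (r - 1), (q ^ (2 * i) - 1)) := by ring
    have hkey : 8 ^ a ≤ (6 * e) ^ a * a.factorial := by
      rcases Nat.lt_or_ge a 2 with h | h
      · have ha1 : a = 1 := by omega
        subst ha1
        have he2 : 2 ≤ e := by omega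
        simp [Nat.factorial]
        omega
      · refine (aux2 a h).trans ?_
        exact Nat.mul_le_mul_right _ (Nat.pow_le_pow_left (by omega) a)
    have hc := core (q ^ e) e a 1 hqe (by simpa using hkey)
    rw [Nat.one_mul] at hc
    have hmul : 2 * (2 ^ (a - 1) * q ^ n) ≤
        2 * ((q ^ e - 1) ^ a * (2 * e) ^ a * a.factorial *
          (q ^ (r * (r - 1)) * (q ^ r - 1) *
            ∏ i ∈ Finset.Icc 1 (r - 1), (q ^ (2 * i) - 1))) := by
      calc 2 * (2 ^ (a - 1) * q ^ n) = (2 ^ a * (q ^ e) ^ a) * q ^ r := by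
            rw [← Nat.mul_assoc, h2a, hn, pow_add, hXa]; ring
        _ ≤ ((q ^ e - 1) ^ a * (2 * e) ^ a * a.factorial) *
            (2 * (q ^ (r * (r - 1)) * (q ^ r - 1) *
              ∏ i ∈ Finset.Icc 1 (r - 1), (q ^ (2 * i) - 1))) := Nat.mul_le_mul hc hT
        _ = 2 * ((q ^ e - 1) ^ a * (2 * e) ^ a * a.factorial *
            (q ^ (r * (r - 1)) * (q ^ r - 1) *
              ∏ i ∈ Finset.Icc 1 (r - 1), (q ^ (2 * i) - 1))) := by ring
    exact Nat.le_of_mul_le_mul_left hmul (by norm_num)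
end

section
/- Let p be a prime and let n = a·p + r with natural numbers a, r satisfying 0 ≤ a ≤ p − 1 and 0 ≤ r ≤ p − 1. Let x be an element of the symmetric group S_n whose cycle type is (p)^a, i.e. x is a product of a disjoint p-cycles. Then for every Sylow p-subgroup P of S_n containing x, the subnormaliser of x in S_n equals the normaliser of P in S_n: Sub_{S_n}(x) = N_{S_n}(P). (In particular x is picky.) -/
/-- `H` is subnormal in `K` (both subgroups of an ambient group `G`): there is a chain
`H = H₀ ⊴ H₁ ⊴ ⋯ ⊴ Hₘ = K` with each term normal in the next. -/
def Subgroup.IsSubnormalIn {G : Type*} [Group G] (H K : Subgroup G) : Prop :=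
  ∃ (m : ℕ) (c : ℕ → Subgroup G), c 0 = H ∧ c m = K ∧
    ∀ i < m, c i ≤ c (i + 1) ∧ ((c i).subgroupOf (c (i + 1))).Normal

/-- The subnormaliser of an element `x` of a group `G`: the subgroup generated by all
`g ∈ G` such that `⟨x⟩` is subnormal in `⟨g, x⟩`. -/
def subnormaliser {G : Type*} [Group G] (x : G) : Subgroup G :=
  Subgroup.closure
    {g : G | Subgroup.IsSubnormalIn (Subgroup.zpowers x) (Subgroup.closure {g, x})}

open Subgroup Pointwise

section GroupLemmas
variable {G : Type*} [Group G]

lemma normal_subgroupOf_of_le_normalizer {X K : Subgroup G} (hXK : X ≤ K)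
    (hK : K ≤ normalizer (X : Set G)) : (X.subgroupOf K).Normal := by
  rw [normal_subgroupOf_iff hXK]
  intro h k hh hk
  exact ((mem_normalizer_iff.1 (hK hk)) h).1 hh

lemma lt_normalizer_inf_of_pGroup [Finite G] {p : ℕ} [Fact p.Prime] {X M : Subgroup G}
    (hM : IsPGroup p M) (hXM : X < M) : X < normalizer (X : Set G) ⊓ M := by
  have hle : X ≤ M := hXM.le
  haveI : Group.IsNilpotent ↥M := hM.isNilpotent
  have hNC : NormalizerCondition ↥M := normalizerCondition_of_isNilpotent
  have hX' : X.subgroupOf M < ⊤ := by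
    rw [lt_top_iff_ne_top]
    intro h
    exact hXM.ne (le_antisymm hle (subgroupOf_eq_top.1 h))
  obtain ⟨-, h₀, h₀n, h₀x⟩ := SetLike.lt_iff_le_and_exists.1 (hNC _ hX')
  have key : ∀ h : G, h ∈ X ↔ (h₀ : G) * h * (h₀ : G)⁻¹ ∈ X := by
    intro h
    by_cases hh : h ∈ M
    · have := (mem_normalizer_iff.1 h₀n) ⟨h, hh⟩
      simp only [mem_subgroupOf] at this
      convert this using 2
      simp
    · constructor
      · intro hX; exact absurd (hle hX) hh
      · intro hX
        exfalso
        apply hh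
        have : (h₀ : G)⁻¹ * ((h₀ : G) * h * (h₀ : G)⁻¹) * (h₀ : G) ∈ M :=
          mul_mem (mul_mem (inv_mem h₀.2) (hle hX)) h₀.2
        simpa [mul_assoc] using this
  refine SetLike.lt_iff_le_and_exists.mpr ⟨le_inf le_normalizer hle, (h₀ : G),
    mem_inf.2 ⟨mem_normalizer_iff.2 key, h₀.2⟩, fun hc => h₀x ?_⟩
  exact mem_subgroupOf.2 hc

private def nchain (X M : Subgroup G) : ℕ → Subgroup G
  | 0 => X
  | (i + 1) => normalizer (nchain X M i : Set G) ⊓ M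

private lemma nchain_le_M {X M : Subgroup G} (hXM : X ≤ M) : ∀ i, nchain X M i ≤ M
  | 0 => hXM
  | (_ + 1) => inf_le_right

private lemma nchain_mono {X M : Subgroup G} (hXM : X ≤ M) (i : ℕ) :
    nchain X M i ≤ nchain X M (i + 1) :=
  le_inf le_normalizer (nchain_le_M hXM i)

private lemma nchain_eq_M {X M : Subgroup G} {i : ℕ} (h : nchain X M i = M) :
    nchain X M (i + 1) = M := by
  show normalizer (nchain X M i : Set G) ⊓ M = M
  rw [h, inf_eq_right]
  exact le_normalizer

lemma Subgroup.IsSubnormalIn.of_le_pGroup [Finite G] {p : ℕ} [Fact p.Prime] {X M : Subgroup G}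
    (hM : IsPGroup p M) (hXM : X ≤ M) : X.IsSubnormalIn M := by
  have growth : ∀ i, nchain X M i = M ∨ i < Nat.card (nchain X M i) := by
    intro i
    induction i with
    | zero => exact Or.inr Nat.card_pos
    | succ i ih =>
      rcases ih with h | h
      · exact Or.inl (nchain_eq_M h)
      · by_cases he : nchain X M i = M
        · exact Or.inl (nchain_eq_M he)
        · right
          have hlt : nchain X M i < nchain X M (i + 1) :=
            lt_normalizer_inf_of_pGroup hM (lt_of_le_of_ne (nchain_le_M hXM i) he)
          have hcard : Nat.card (nchain X M i) < Nat.card (nchain X M (i + 1)) := by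
            have hfin : ((nchain X M (i+1) : Subgroup G) : Set G).Finite := Set.toFinite _
            have := Set.ncard_lt_ncard (SetLike.coe_ssubset_coe.2 hlt) hfin
            rw [← Nat.card_coe_set_eq, ← Nat.card_coe_set_eq] at this
            exact this
          omega
  have hfinal : nchain X M (Nat.card G) = M := by
    rcases growth (Nat.card G) with h | h
    · exact h
    · exact absurd ((nchain X M (Nat.card G)).card_le_card_group) (by omega)
  refine ⟨Nat.card G, nchain X M, rfl, hfinal, fun i _ => ⟨nchain_mono hXM i, ?_⟩⟩
  exact _root_.normal_subgroupOf_of_le_normalizer (nchain_mono hXM i) inf_le_left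

lemma Subgroup.IsSubnormalIn.append {X M H : Subgroup G} (h : X.IsSubnormalIn M) (hMH : M ≤ H)
    (hnorm : (M.subgroupOf H).Normal) : X.IsSubnormalIn H := by
  obtain ⟨m, c, h0, hm, hch⟩ := h
  refine ⟨m + 1, fun i => if i < m + 1 then c i else H, by simpa using h0, by simp, ?_⟩
  intro i hi
  rcases Nat.lt_or_ge i m with hlt | hge
  · have h1 : i < m + 1 := by omega
    have h2 : i + 1 < m + 1 := by omega
    dsimp only
    simp only [if_pos h1, if_pos h2]
    obtain ⟨h3, h4⟩ := hch i hlt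
    have h5 : (c i ≤ if i + 1 < m + 1 then c (i + 1) else H) := by simpa [h2] using h3
    refine ⟨h3, (normal_subgroupOf_iff h5).2 ?_⟩
    simpa [h2] using (normal_subgroupOf_iff h3).1 h4
  · have hieq : i = m := by omega
    subst hieq
    dsimp only
    simp only [if_pos (by omega : i < i + 1), if_neg (lt_irrefl (i + 1)), hm]
    have h5 : (M ≤ if i + 1 < i + 1 then c (i + 1) else H) := by simpa using hMH
    exact ⟨hMH, (normal_subgroupOf_iff h5).2 (by simpa using (normal_subgroupOf_iff hMH).1 hnorm)⟩
end GroupLemmas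


section MaxP
variable {G : Type*} [Group G] {p : ℕ}

/-- `Q` is a maximal `p`-subgroup of the subgroup `H` (all within ambient `G`). -/
def IsMaxP (p : ℕ) (H Q : Subgroup G) : Prop :=
  Q ≤ H ∧ IsPGroup p Q ∧ ∀ R : Subgroup G, R ≤ H → IsPGroup p R → Q ≤ R → R = Q

lemma exists_maxP_le {X H : Subgroup G} (hX : IsPGroup p X) (hXH : X ≤ H) :
    ∃ Q : Subgroup G, IsMaxP p H Q ∧ X ≤ Q := by
  have hX' : IsPGroup p (X.subgroupOf H) :=
    hX.of_equiv (subgroupOfEquivOfLe hXH).symm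
  obtain ⟨S, hS⟩ := hX'.exists_le_sylow
  refine ⟨Subgroup.map H.subtype (S : Subgroup ↥H), ⟨map_subtype_le _, S.2.map _, ?_⟩, ?_⟩
  · intro R hRH hRp hQR
    have hSR : (S : Subgroup ↥H) ≤ R.subgroupOf H := by
      intro s hs
      exact mem_subgroupOf.2 (hQR (mem_map_of_mem _ hs))
    have hRp' : IsPGroup p (R.subgroupOf H) := hRp.of_equiv (subgroupOfEquivOfLe hRH).symm
    have : R.subgroupOf H = S := S.3 hRp' hSR
    calc R = R ⊓ H := (inf_eq_left.2 hRH).symm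
    _ = (R.subgroupOf H).map H.subtype := (subgroupOf_map_subtype _ _).symm
    _ = Subgroup.map H.subtype (S : Subgroup ↥H) := by rw [this]
  · calc X = X ⊓ H := (inf_eq_left.2 hXH).symm
    _ = (X.subgroupOf H).map H.subtype := (subgroupOf_map_subtype _ _).symm
    _ ≤ _ := map_mono hS

lemma le_maxP_of_normal [Finite G] [Fact p.Prime] {H N Q : Subgroup G} (hN : IsPGroup p N)
    (hNH : N ≤ H) (hnorm : ∀ h ∈ H, ∀ x ∈ N, h * x * h⁻¹ ∈ N) (hQ : IsMaxP p H Q) : N ≤ Q := by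
  have hQ'p : IsPGroup p (Q.subgroupOf H) := hQ.2.1.of_equiv (subgroupOfEquivOfLe hQ.1).symm
  have hQ'max : ∀ R' : Subgroup ↥H, IsPGroup p R' → Q.subgroupOf H ≤ R' → R' = Q.subgroupOf H := by
    intro R' hR'p hQR'
    have hRH : R'.map H.subtype ≤ H := map_subtype_le _
    have hQR : Q ≤ R'.map H.subtype := by
      intro q hq
      exact mem_map_of_mem _ (hQR' (mem_subgroupOf.2 (show ((⟨q, hQ.1 hq⟩ : ↥H) : G) ∈ Q from hq)))
    have hRQ : R'.map H.subtype = Q := hQ.2.2 _ hRH (hR'p.map _) hQR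
    apply Subgroup.map_injective H.subtype_injective
    rw [subgroupOf_map_subtype, inf_eq_left.2 hQ.1, hRQ]
  let SQ : Sylow p ↥H := ⟨Q.subgroupOf H, hQ'p, fun {R'} a b => hQ'max R' a b⟩
  have hN'p : IsPGroup p (N.subgroupOf H) := hN.of_equiv (subgroupOfEquivOfLe hNH).symm
  obtain ⟨S, hS⟩ := hN'p.exists_le_sylow
  obtain ⟨g, hg⟩ := MulAction.exists_smul_eq ↥H SQ S
  intro x hx
  have hxH : x ∈ H := hNH hx
  have hzmem : (g : G) * x * (g : G)⁻¹ ∈ H := mul_mem (mul_mem g.2 hxH) (inv_mem g.2)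
  have hmem : (⟨_, hzmem⟩ : ↥H) ∈ N.subgroupOf H := mem_subgroupOf.2 (hnorm _ g.2 _ hx)
  have hmemS : (⟨_, hzmem⟩ : ↥H) ∈ (S : Set ↥H) := hS hmem
  rw [← hg, Sylow.coe_smul, Set.mem_smul_set_iff_inv_smul_mem] at hmemS
  have hz : (MulAut.conj g)⁻¹ • (⟨_, hzmem⟩ : ↥H) = (⟨x, hxH⟩ : ↥H) := by
    ext
    simp only [MulAut.smul_def, MulAut.conj_inv_apply, Subgroup.coe_mul, InvMemClass.coe_inv]
    group
  rw [hz] at hmemS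
  exact mem_subgroupOf.1 hmemS

private lemma conj_map_map (g : G) (A : Subgroup G) :
    Subgroup.map (MulAut.conj g).toMonoidHom
      (Subgroup.map (MulAut.conj g⁻¹).toMonoidHom A) = A := by
  rw [Subgroup.map_map]
  convert Subgroup.map_id A using 2
  ext a
  simp [MulAut.conj_apply]
  group

lemma chain_le_maxP [Finite G] [Fact p.Prime] :
    ∀ (m : ℕ) (c : ℕ → Subgroup G),
      (∀ i < m, c i ≤ c (i + 1) ∧ ((c i).subgroupOf (c (i + 1))).Normal) →
      IsPGroup p (c 0) → ∀ Q : Subgroup G, IsMaxP p (c m) Q → c 0 ≤ Q := by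
  intro m
  induction m with
  | zero =>
    intro c _ hc0 Q hQ
    exact (hQ.2.2 (c 0) le_rfl hc0 hQ.1).le
  | succ m ih =>
    intro c hchain hc0 Q hQ
    have hKH : c m ≤ c (m + 1) := (hchain m (lt_add_one m)).1
    have hKnorm : ∀ h ∈ c (m + 1), ∀ k ∈ c m, h * k * h⁻¹ ∈ c m :=
      fun h hh k hk => (normal_subgroupOf_iff hKH).1 (hchain m (lt_add_one m)).2 k h hk hh
    obtain ⟨Q₀, hQ₀, -⟩ := exists_maxP_le (IsPGroup.of_bot) (bot_le : ⊥ ≤ c m)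
    set D : Subgroup G :=
      ⨅ h : ↥(c (m + 1)), Subgroup.map (MulAut.conj (h : G)).toMonoidHom Q₀ with hD
    have hconj : ∀ h : ↥(c (m + 1)),
        IsMaxP p (c m) (Subgroup.map (MulAut.conj (h : G)).toMonoidHom Q₀) := by
      intro h
      refine ⟨?_, hQ₀.2.1.map _, ?_⟩
      · rintro y ⟨q, hq, rfl⟩
        exact hKnorm _ h.2 q (hQ₀.1 hq)
      · intro R hR hRp hle
        have h1 : Subgroup.map (MulAut.conj ((h : G)⁻¹)).toMonoidHom R ≤ c m := by
          rintro y ⟨rr, hrr, rfl⟩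
          exact hKnorm _ (inv_mem h.2) rr (hR hrr)
        have h2 : Q₀ ≤ Subgroup.map (MulAut.conj ((h : G)⁻¹)).toMonoidHom R := by
          have := map_mono (f := (MulAut.conj ((h : G)⁻¹)).toMonoidHom) hle
          rwa [show Subgroup.map (MulAut.conj ((h:G)⁻¹)).toMonoidHom
              (Subgroup.map (MulAut.conj (h:G)).toMonoidHom Q₀) = Q₀ from by
            simpa using conj_map_map (h : G)⁻¹ Q₀] at this
        have h3 := hQ₀.2.2 _ h1 (hRp.map _) h2
        calc R = Subgroup.map (MulAut.conj (h:G)).toMonoidHom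
              (Subgroup.map (MulAut.conj ((h:G)⁻¹)).toMonoidHom R) := (conj_map_map _ _).symm
        _ = _ := by rw [h3]
    have hXD : c 0 ≤ D :=
      le_iInf fun h => ih c (fun i hi => hchain i (hi.trans (lt_add_one m))) hc0 _ (hconj h)
    have hD1 : D ≤ Subgroup.map (MulAut.conj ((1 : ↥(c (m+1))) : G)).toMonoidHom Q₀ := iInf_le _ _
    have hDK : D ≤ c m := hD1.trans (hconj 1).1
    have hDp : IsPGroup p D := ((hconj 1).2.1).to_le hD1
    have hDnorm : ∀ h' ∈ c (m + 1), ∀ d ∈ D, h' * d * h'⁻¹ ∈ D := by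
      intro h' hh' d hd
      rw [hD, mem_iInf]
      intro h
      have hd' := (mem_iInf.1 hd) ((⟨h', hh'⟩ : ↥(c (m+1)))⁻¹ * h)
      obtain ⟨q, hq, heq⟩ := hd'
      refine ⟨q, hq, ?_⟩
      simp only [MulEquiv.coe_toMonoidHom, MulAut.conj_apply] at heq ⊢
      rw [← heq]
      push_cast
      group
    exact hXD.trans (le_maxP_of_normal hDp (hDK.trans hKH) hDnorm hQ)
end MaxP


section PermLemmas
variable {p n : ℕ} [hp : Fact p.Prime]

lemma perm_pow_p_eq_one (hn2 : n < p ^ 2) {σ : Equiv.Perm (Fin n)} (h : ∃ k, σ ^ p ^ k = 1) :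
    σ ^ p = 1 := by
  obtain ⟨k, hk⟩ := h
  have hord : orderOf σ ∣ p ^ k := orderOf_dvd_iff_pow_eq_one.2 hk
  rw [← orderOf_dvd_iff_pow_eq_one, ← Equiv.Perm.lcm_cycleType]
  refine Multiset.lcm_dvd.2 fun b hb => ?_
  have hbd : b ∣ p ^ k := dvd_trans (Multiset.dvd_lcm hb) (Equiv.Perm.lcm_cycleType σ ▸ hord)
  obtain ⟨j, hj, rfl⟩ := (Nat.dvd_prime_pow hp.out).1 hbd
  have hble : p ^ j ≤ n := by
    calc p ^ j ≤ σ.cycleType.sum := Multiset.single_le_sum (fun x _ => Nat.zero_le x) _ hb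
    _ = σ.support.card := σ.sum_cycleType
    _ ≤ n := by simpa using Finset.card_le_univ σ.support
  have hj1 : j ≤ 1 := by
    by_contra hj2
    exact absurd hble (not_le.2 (lt_of_lt_of_le hn2 (Nat.pow_le_pow_right hp.out.one_lt.le (by omega))))
  calc p ^ j ∣ p ^ 1 := pow_dvd_pow p hj1
  _ = p := pow_one p

lemma pgroup_commute (hn2 : n < p ^ 2) {R : Subgroup (Equiv.Perm (Fin n))} (hR : IsPGroup p R)
    {σ τ : Equiv.Perm (Fin n)} (hσ : σ ∈ R) (hτ : τ ∈ R) : Commute σ τ := by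
  set T : Subgroup (Equiv.Perm (Fin n)) := Subgroup.closure {σ, τ} with hT
  have hσT : σ ∈ T := subset_closure (by simp)
  have hτT : τ ∈ T := subset_closure (by simp)
  have hTR : T ≤ R := (closure_le _).2 (by
    rintro z hz
    rcases hz with rfl | rfl
    exacts [hσ, hτ])
  have hTp : IsPGroup p T := hR.to_le hTR
  show σ * τ = τ * σ
  apply Equiv.ext
  intro i
  set O := MulAction.orbit ↥T i with hO
  have hi : i ∈ O := MulAction.mem_orbit_self i
  set ψ := MulAction.toPermHom ↥T ↥O with hψ
  -- the orbit has cardinality dividing p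
  have hcard1 : Nat.card ↥O ∣ Nat.card ↥T := by
    rw [Nat.card_congr (MulAction.orbitEquivQuotientStabilizer ↥T i)]
    exact Subgroup.card_quotient_dvd_card _
  obtain ⟨kT, hkT⟩ := IsPGroup.iff_card.1 hTp
  have hOp : Nat.card ↥O ∣ p := by
    rw [hkT] at hcard1
    obtain ⟨j, hj, hjeq⟩ := (Nat.dvd_prime_pow hp.out).1 hcard1
    have hle : Nat.card ↥O ≤ n := by
      have := Nat.card_le_card_of_injective (Subtype.val : ↥O → Fin n) Subtype.coe_injective
      simpa using this
    have hj1 : j ≤ 1 := by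
      by_contra hj2
      rw [hjeq] at hle
      exact absurd hle (not_le.2 (lt_of_lt_of_le hn2 (Nat.pow_le_pow_right hp.out.one_lt.le (by omega))))
    rw [hjeq]
    calc p ^ j ∣ p ^ 1 := pow_dvd_pow p hj1
    _ = p := pow_one p
  -- the image of ψ has cardinality dividing p
  have hrange : IsPGroup p ψ.range := hTp.of_surjective ψ.rangeRestrict ψ.rangeRestrict_surjective
  obtain ⟨s, hs⟩ := IsPGroup.iff_card.1 hrange
  have hfac : Nat.card ψ.range ∣ Nat.factorial p := by
    have h1 : Nat.card ψ.range ∣ Nat.card (Equiv.Perm ↥O) := Subgroup.card_subgroup_dvd_card _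
    have h2 : Nat.card (Equiv.Perm ↥O) = Nat.factorial (Nat.card ↥O) := by
      classical
      letI : Fintype ↥O := Fintype.ofFinite ↥O
      rw [Nat.card_eq_fintype_card, Fintype.card_perm, Nat.card_eq_fintype_card]
    have h3 : Nat.factorial (Nat.card ↥O) ∣ Nat.factorial p :=
      Nat.factorial_dvd_factorial (Nat.le_of_dvd hp.out.pos hOp)
    exact (h2 ▸ h1).trans h3
  have hsp : Nat.card ψ.range ∣ p := by
    rw [hs] at hfac ⊢
    have hs1 : s ≤ 1 := by
      by_contra hs2
      have hp2 := hp.out.two_le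
      have h2s : 2 ≤ s := by omega
      have hpp : p ^ 2 ∣ Nat.factorial p := (pow_dvd_pow p h2s).trans hfac
      have hfp : Nat.factorial p = p * Nat.factorial (p - 1) := by
        conv_lhs => rw [show p = (p - 1) + 1 by omega]
        rw [Nat.factorial_succ]
        congr 1
        omega
      rw [hfp, pow_two] at hpp
      have hd1 := (Nat.mul_dvd_mul_iff_left hp.out.pos).1 hpp
      have hd2 := (Nat.Prime.dvd_factorial hp.out).1 hd1
      omega
    calc p ^ s ∣ p ^ 1 := pow_dvd_pow p hs1
    _ = p := pow_one p
  -- hence the image is commutative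
  have hcomm : ψ ⟨σ, hσT⟩ * ψ ⟨τ, hτT⟩ = ψ ⟨τ, hτT⟩ * ψ ⟨σ, hσT⟩ := by
    rcases (Nat.dvd_prime hp.out).1 hsp with h1 | h1
    · have : ψ.range = ⊥ := Subgroup.card_eq_one.1 h1
      have e1 : ψ ⟨σ, hσT⟩ = 1 := by
        have : ψ ⟨σ, hσT⟩ ∈ (⊥ : Subgroup (Equiv.Perm ↥O)) := this ▸ ⟨_, rfl⟩
        simpa [Subgroup.mem_bot] using this
      have e2 : ψ ⟨τ, hτT⟩ = 1 := by
        have : ψ ⟨τ, hτT⟩ ∈ (⊥ : Subgroup (Equiv.Perm ↥O)) := this ▸ ⟨_, rfl⟩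
        simpa [Subgroup.mem_bot] using this
      rw [e1, e2]
    · haveI : IsCyclic ψ.range := isCyclic_of_prime_card h1
      letI : CommGroup ψ.range := IsCyclic.commGroup
      have := mul_comm (⟨ψ ⟨σ, hσT⟩, ⟨_, rfl⟩⟩ : ψ.range)
        (⟨ψ ⟨τ, hτT⟩, ⟨_, rfl⟩⟩ : ψ.range)
      exact Subtype.ext_iff.1 this
  -- evaluate at i
  have := congrArg (fun w : Equiv.Perm ↥O => ((w ⟨i, hi⟩ : ↥O) : Fin n)) hcomm
  exact this
end PermLemmas


section Unique
variable {p a r n : ℕ} [hp : Fact p.Prime]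


lemma sylow_eq_of_mem (ha : a < p) (hr : r < p) (hn : n = a * p + r)
    (y : Equiv.Perm (Fin n)) (hy : y.cycleType = Multiset.replicate a p)
    (P Q : Sylow p (Equiv.Perm (Fin n))) (hyP : y ∈ P) (hyQ : y ∈ Q) : P = Q := by
  classical
  have hn2 : n < p ^ 2 := by
    have h1 : n < (a + 1) * p := by rw [hn]; nlinarith
    have h2 : (a + 1) * p ≤ p * p := Nat.mul_le_mul_right p (by omega)
    rw [pow_two]; omega
  -- cardinality of Sylow subgroups
  have hcardP : ∀ P' : Sylow p (Equiv.Perm (Fin n)),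
      Nat.card ↥(P' : Subgroup (Equiv.Perm (Fin n))) = p ^ a := by
    intro P'
    rw [P'.card_eq_multiplicity]
    congr 1
    have hG : Nat.card (Equiv.Perm (Fin n)) = Nat.factorial n := by
      rw [Nat.card_eq_fintype_card, Fintype.card_perm, Fintype.card_fin]
    rw [hG, Nat.factorization_def _ hp.out, hn, show a * p + r = p * a + r by ring,
      padicValNat_factorial_mul_add a hr, padicValNat_factorial_mul]
    have h0 : padicValNat p (Nat.factorial a) = 0 := by
      rw [← Nat.factorization_def _ hp.out]
      exact Nat.factorization_factorial_eq_zero_of_lt ha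
    rw [h0, zero_add]
  -- the candidate set
  set K : Set (Equiv.Perm (Fin n)) := {σ | Commute σ y ∧ ∀ i, y.SameCycle i (σ i)} with hKdef
  -- every Sylow containing y is inside K
  have hsub : ∀ P' : Sylow p (Equiv.Perm (Fin n)), y ∈ P' →
      ((P' : Subgroup (Equiv.Perm (Fin n))) : Set (Equiv.Perm (Fin n))) ⊆ K := by
    intro P' hyP' σ hσ
    have hcomm : Commute σ y := pgroup_commute hn2 P'.2 hσ hyP'
    have hσp : σ ^ p = 1 := by
      refine perm_pow_p_eq_one hn2 ?_
      obtain ⟨k, hk⟩ := P'.2 ⟨σ, hσ⟩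
      exact ⟨k, by simpa using congrArg Subtype.val hk⟩
    have hkey : ∀ j, y (σ j) = σ (y j) := by
      intro j
      calc y (σ j) = (y * σ) j := rfl
      _ = (σ * y) j := by rw [hcomm.eq]
      _ = σ (y j) := rfl
    refine ⟨hcomm, fun i => ?_⟩
    by_cases hfix : y i = i
    · -- i is a fixed point of y : show σ i = i
      have hinv : ∀ j : Fin n, y j = j ↔ y (σ j) = σ j := by
        intro j
        constructor
        · intro h; rw [hkey, h]
        · intro h; rw [hkey] at h; exact σ.injective h
      set τ := σ.subtypePerm (p := fun j => y j = j) (fun j => (hinv j).symm) with hτdef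
      have hτp : τ ^ p = 1 := by
        rw [hτdef, Equiv.Perm.subtypePerm_pow]
        apply Equiv.ext
        rintro ⟨j, hj⟩
        simp [Equiv.Perm.subtypePerm_apply, hσp]
      have hcardF : Fintype.card {j : Fin n // y j = j} = r := by
        have h1 : (Finset.univ.filter (fun j : Fin n => y j = j)) = y.supportᶜ := by
          ext j; simp [Equiv.Perm.mem_support]
        rw [Fintype.card_subtype, h1, Finset.card_compl, Fintype.card_fin]
        have h2 : y.support.card = a * p := by
          rw [← Equiv.Perm.sum_cycleType, hy, Multiset.sum_replicate, smul_eq_mul]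
        rw [h2, hn]; omega
      have hordp : orderOf τ ∣ p := orderOf_dvd_iff_pow_eq_one.2 hτp
      have hordfac : orderOf τ ∣ Nat.factorial r := by
        have h3 := orderOf_dvd_card (x := τ)
        rwa [Fintype.card_perm, hcardF] at h3
      have hτ1 : τ = 1 := by
        rw [← orderOf_eq_one_iff]
        rcases (Nat.dvd_prime hp.out).1 hordp with h | h
        · exact h
        · rw [h] at hordfac
          have := (Nat.Prime.dvd_factorial hp.out).1 hordfac
          omega
      have hσi : σ i = i := by
        have := congrArg (fun w : Equiv.Perm {j : Fin n // y j = j} =>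
          ((w ⟨i, hfix⟩ : {j : Fin n // y j = j}) : Fin n)) hτ1
        simpa [hτdef, Equiv.Perm.subtypePerm_apply] using this
      rw [hσi]
    · -- i is in the support of y
      have hisup : i ∈ y.support := Equiv.Perm.mem_support.2 hfix
      have hmemconj : ∀ g : Equiv.Perm (Fin n), Commute g y →
          ∀ c ∈ y.cycleFactorsFinset, g * c * g⁻¹ ∈ y.cycleFactorsFinset := by
        intro g hg c hc
        rw [Equiv.Perm.mem_cycleFactorsFinset_iff] at hc ⊢
        refine ⟨hc.1.conj, ?_⟩
        intro bb hb
        rw [Equiv.Perm.support_conj] at hb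
        obtain ⟨b0, hb0, rfl⟩ := Finset.mem_map.1 hb
        simp only [Equiv.toEmbedding_apply]
        have h1 : (g * c * g⁻¹) (g b0) = g (c b0) := by simp [Equiv.Perm.mul_apply]
        rw [h1, hc.2 b0 hb0]
        calc g (y b0) = (g * y) b0 := rfl
        _ = (y * g) b0 := by rw [hg.eq]
        _ = y (g b0) := rfl
      set f : Equiv.Perm {c // c ∈ y.cycleFactorsFinset} :=
        ⟨fun c => ⟨σ * c * σ⁻¹, hmemconj σ hcomm c c.2⟩,
         fun c => ⟨σ⁻¹ * c * σ, by simpa using hmemconj σ⁻¹ hcomm.inv_left c c.2⟩,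
         fun c => Subtype.ext (by group),
         fun c => Subtype.ext (by group)⟩ with hfdef
      have hfpow : ∀ (k : ℕ) (c : {c // c ∈ y.cycleFactorsFinset}), ((f ^ k) c : Equiv.Perm (Fin n)) = σ ^ k * c * (σ ^ k)⁻¹ := by
        intro k
        induction k with
        | zero => intro c; simp
        | succ k ih =>
          intro c
          have h1 : (f ^ (k + 1)) c = (f ^ k) (f c) := by
            rw [pow_succ]; rfl
          rw [h1, ih (f c)]
          have h2 : (f c : Equiv.Perm (Fin n)) = σ * c * σ⁻¹ := rfl
          rw [h2, pow_succ]
          group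
      have hf1 : f = 1 := by
        have hfp : f ^ p = 1 := by
          apply Equiv.ext
          intro c
          apply Subtype.ext
          rw [show ((1 : Equiv.Perm {c // c ∈ y.cycleFactorsFinset}) c : Equiv.Perm (Fin n)) = (c : Equiv.Perm (Fin n)) from rfl]
          rw [hfpow p c, hσp]
          group
        have hordp : orderOf f ∣ p := orderOf_dvd_iff_pow_eq_one.2 hfp
        have hcardF : Fintype.card {c // c ∈ y.cycleFactorsFinset} = a := by
          rw [Fintype.card_coe]
          have h4 : Multiset.card y.cycleType = a := by rw [hy, Multiset.card_replicate]
          rw [Equiv.Perm.cycleType_def, Multiset.card_map] at h4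
          exact h4
        have hordfac : orderOf f ∣ Nat.factorial a := by
          have h3 := orderOf_dvd_card (x := f)
          rwa [Fintype.card_perm, hcardF] at h3
        rw [← orderOf_eq_one_iff]
        rcases (Nat.dvd_prime hp.out).1 hordp with h | h
        · exact h
        · rw [h] at hordfac
          have := (Nat.Prime.dvd_factorial hp.out).1 hordfac
          omega
      have hcyc : y.cycleOf i ∈ y.cycleFactorsFinset :=
        Equiv.Perm.cycleOf_mem_cycleFactorsFinset_iff.2 hisup
      have hfix2 : σ * (y.cycleOf i) * σ⁻¹ = y.cycleOf i := by
        have := congrArg (fun w : Equiv.Perm {c // c ∈ y.cycleFactorsFinset} =>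
          ((w ⟨y.cycleOf i, hcyc⟩ : {c // c ∈ y.cycleFactorsFinset}) : Equiv.Perm (Fin n))) hf1
        simpa [hfdef] using this
      have hiin : i ∈ (y.cycleOf i).support :=
        Equiv.Perm.mem_support_cycleOf_iff.2 ⟨Equiv.Perm.SameCycle.refl _ _, hisup⟩
      have hσiin : σ i ∈ (y.cycleOf i).support := by
        rw [← hfix2, Equiv.Perm.support_conj]
        exact Finset.mem_map_of_mem _ hiin
      exact (Equiv.Perm.mem_support_cycleOf_iff.1 hσiin).1
  -- K is small : at most p ^ a elements
  have hKcard : Nat.card ↥K ≤ p ^ a := by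
    have hne : ∀ c : {c // c ∈ y.cycleFactorsFinset},
        (c : Equiv.Perm (Fin n)).support.Nonempty := by
      intro c
      obtain ⟨x0, hx0, -⟩ := (Equiv.Perm.mem_cycleFactorsFinset_iff.1 c.2).1
      exact ⟨x0, Equiv.Perm.mem_support.2 hx0⟩
    set bpt : {c // c ∈ y.cycleFactorsFinset} → Fin n :=
      fun c => (c : Equiv.Perm (Fin n)).support.min' (hne c) with hbpt
    have hbmem : ∀ c : {c // c ∈ y.cycleFactorsFinset}, bpt c ∈ (c : Equiv.Perm (Fin n)).support :=
      fun c => Finset.min'_mem _ _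
    have hcycOf : ∀ c : {c // c ∈ y.cycleFactorsFinset},
        (c : Equiv.Perm (Fin n)) = y.cycleOf (bpt c) :=
      fun c => Equiv.Perm.cycle_is_cycleOf (hbmem c) c.2
    have hbsup : ∀ c : {c // c ∈ y.cycleFactorsFinset}, bpt c ∈ y.support := by
      intro c
      apply Equiv.Perm.support_cycleOf_le y (bpt c)
      rw [← hcycOf c]
      exact hbmem c
    have hΦmem : ∀ (σ : ↥K) (c : {c // c ∈ y.cycleFactorsFinset}),
        (σ : Equiv.Perm (Fin n)) (bpt c) ∈ (c : Equiv.Perm (Fin n)).support := by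
      intro σ c
      rw [hcycOf c]
      exact Equiv.Perm.mem_support_cycleOf_iff.2 ⟨σ.2.2 (bpt c), hbsup c⟩
    set Φ : ↥K → ∀ c : {c // c ∈ y.cycleFactorsFinset},
        {z // z ∈ (c : Equiv.Perm (Fin n)).support} :=
      fun σ c => ⟨(σ : Equiv.Perm (Fin n)) (bpt c), hΦmem σ c⟩ with hΦ
    have hinj : Function.Injective Φ := by
      intro σ1 σ2 h
      have hvals : ∀ c : {c // c ∈ y.cycleFactorsFinset}, (σ1 : Equiv.Perm (Fin n)) (bpt c) = (σ2 : Equiv.Perm (Fin n)) (bpt c) :=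
        fun c => congrArg Subtype.val (congrFun h c)
      apply Subtype.ext
      apply Equiv.ext
      intro i
      by_cases hfix : y i = i
      · obtain ⟨k1, hk1⟩ := σ1.2.2 i
        obtain ⟨k2, hk2⟩ := σ2.2.2 i
        rw [← hk1, ← hk2, Equiv.Perm.zpow_apply_eq_self_of_apply_eq_self hfix,
          Equiv.Perm.zpow_apply_eq_self_of_apply_eq_self hfix]
      · have hisup : i ∈ y.support := Equiv.Perm.mem_support.2 hfix
        have hcyc : y.cycleOf i ∈ y.cycleFactorsFinset :=
          Equiv.Perm.cycleOf_mem_cycleFactorsFinset_iff.2 hisup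
        set c : {c // c ∈ y.cycleFactorsFinset} := ⟨y.cycleOf i, hcyc⟩ with hc
        have h1 : bpt c ∈ (y.cycleOf i).support := hbmem c
        have hsc : y.SameCycle (bpt c) i :=
          ((Equiv.Perm.mem_support_cycleOf_iff.1 h1).1).symm
        obtain ⟨k, hk⟩ := hsc
        have hcz : ∀ (w : Equiv.Perm (Fin n)), Commute w y →
            w ((y ^ k) (bpt c)) = (y ^ k) (w (bpt c)) := by
          intro w hw
          have := (hw.zpow_right k).eq
          calc w ((y ^ k) (bpt c)) = (w * y ^ k) (bpt c) := rfl
          _ = (y ^ k * w) (bpt c) := by rw [this]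
          _ = (y ^ k) (w (bpt c)) := rfl
        rw [← hk, hcz _ σ1.2.1, hcz _ σ2.2.1, hvals c]
    calc Nat.card ↥K ≤ Nat.card (∀ c : {c // c ∈ y.cycleFactorsFinset},
        {z // z ∈ (c : Equiv.Perm (Fin n)).support}) := Nat.card_le_card_of_injective Φ hinj
    _ = ∏ c : {c // c ∈ y.cycleFactorsFinset},
        Nat.card {z // z ∈ (c : Equiv.Perm (Fin n)).support} := Nat.card_pi
    _ = p ^ a := by
      have hsupc : ∀ c : {c // c ∈ y.cycleFactorsFinset},
          Nat.card {z // z ∈ (c : Equiv.Perm (Fin n)).support} = p := by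
        intro c
        rw [Nat.card_eq_fintype_card, Fintype.card_coe]
        have hmem : (c : Equiv.Perm (Fin n)).support.card ∈ y.cycleType := by
          rw [Equiv.Perm.cycleType_def]
          exact Multiset.mem_map_of_mem _ c.2
        exact Multiset.eq_of_mem_replicate (hy ▸ hmem)
      rw [Finset.prod_congr rfl (fun c _ => hsupc c), Finset.prod_const]
      have hcardF : Fintype.card {c // c ∈ y.cycleFactorsFinset} = a := by
        rw [Fintype.card_coe]
        have h4 : Multiset.card y.cycleType = a := by rw [hy, Multiset.card_replicate]
        rw [Equiv.Perm.cycleType_def, Multiset.card_map] at h4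
        exact h4
      rw [Finset.card_univ, hcardF]
  -- conclude
  have hKn : ∀ P' : Sylow p (Equiv.Perm (Fin n)), y ∈ P' →
      ((P' : Subgroup (Equiv.Perm (Fin n))) : Set (Equiv.Perm (Fin n))) = K := by
    intro P' hyP'
    refine Set.eq_of_subset_of_ncard_le (hsub P' hyP') ?_ (Set.toFinite _)
    have h1 : ((P' : Subgroup (Equiv.Perm (Fin n))) : Set (Equiv.Perm (Fin n))).ncard = p ^ a := by
      rw [← Nat.card_coe_set_eq]
      exact hcardP P'
    have h2 : K.ncard ≤ p ^ a := by
      rw [← Nat.card_coe_set_eq]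
      exact hKcard
    omega
  apply Sylow.ext
  exact SetLike.coe_injective ((hKn P hyP).trans (hKn Q hyQ).symm)
end Unique


section Main
variable {p a r n : ℕ}

lemma zpowers_pgroup [hp : Fact p.Prime] {G : Type*} [Group G] {z : G} (hz : z ^ p = 1) :
    IsPGroup p (Subgroup.zpowers z) := by
  intro g
  obtain ⟨k, hk⟩ := Subgroup.mem_zpowers_iff.1 g.2
  refine ⟨1, Subtype.ext ?_⟩
  have h1 : (g : G) ^ (p ^ 1 : ℕ) = 1 := by
    rw [← hk, pow_one, ← zpow_natCast, ← zpow_mul, mul_comm, zpow_mul, zpow_natCast, hz, one_zpow]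
  simpa using h1

/-- Proposition 5.1 (first case): let `p` be a prime, `n = a·p + r` with `a, r ≤ p - 1`,
and `x ∈ S_n` of cycle type `(p)^a`. Then for every Sylow `p`-subgroup `P` of `S_n`
containing `x`, the subnormaliser of `x` equals the normaliser of `P`, i.e. `x` is picky. -/
theorem subnormaliser_perm_full_cycle_count (p : ℕ) (hp : p.Prime) (a r n : ℕ)
    (ha : a ≤ p - 1) (hr : r ≤ p - 1) (hn : n = a * p + r)
    (x : Equiv.Perm (Fin n)) (hx : x.cycleType = Multiset.replicate a p)
    (P : Sylow p (Equiv.Perm (Fin n))) (hxP : x ∈ (P : Subgroup (Equiv.Perm (Fin n)))) :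
    subnormaliser x = Subgroup.normalizer ((P : Subgroup (Equiv.Perm (Fin n))) : Set (Equiv.Perm (Fin n))) := by
  haveI : Fact p.Prime := ⟨hp⟩
  have hp2 := hp.two_le
  have ha' : a < p := by omega
  have hr' : r < p := by omega
  have hxp : x ^ p = 1 := by
    rw [← orderOf_dvd_iff_pow_eq_one, ← Equiv.Perm.lcm_cycleType, hx]
    exact Multiset.lcm_dvd.2 fun b hb => (Multiset.eq_of_mem_replicate hb) ▸ dvd_rfl
  have hzp : IsPGroup p (Subgroup.zpowers x) := zpowers_pgroup hxp
  apply le_antisymm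
  · -- the subnormaliser is contained in the normalizer of P
    rw [subnormaliser]
    refine (Subgroup.closure_le _).2 ?_
    intro g hg
    obtain ⟨m, c, h0, hm, hch⟩ := hg
    have hxH : x ∈ Subgroup.closure ({g, x} : Set (Equiv.Perm (Fin n))) :=
      Subgroup.subset_closure (by simp)
    have hgH : g ∈ Subgroup.closure ({g, x} : Set (Equiv.Perm (Fin n))) :=
      Subgroup.subset_closure (by simp)
    have hyH : g * x * g⁻¹ ∈ Subgroup.closure ({g, x} : Set (Equiv.Perm (Fin n))) :=
      mul_mem (mul_mem hgH hxH) (inv_mem hgH)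
    have hconjp : (g * x * g⁻¹) ^ p = 1 := by
      have h1 := (map_pow (MulAut.conj g).toMonoidHom x p).symm
      simp only [MulEquiv.coe_toMonoidHom, MulAut.conj_apply] at h1
      rw [h1, hxp]
      simp
    have hzyp : IsPGroup p (Subgroup.zpowers (g * x * g⁻¹)) := zpowers_pgroup hconjp
    obtain ⟨Qm, hQm, hyQm⟩ := exists_maxP_le hzyp (Subgroup.zpowers_le.2 hyH)
    have hxQm : Subgroup.zpowers x ≤ Qm := by
      have := chain_le_maxP m c hch (by rw [h0]; exact hzp) Qm (by rw [hm]; exact hQm)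
      rwa [h0] at this
    obtain ⟨P', hQP'⟩ := hQm.2.1.exists_le_sylow
    have hxP' : x ∈ P' := hQP' (hxQm (Subgroup.mem_zpowers x))
    have hyP' : g * x * g⁻¹ ∈ P' := hQP' (hyQm (Subgroup.mem_zpowers _))
    have hPP' : P' = P := sylow_eq_of_mem ha' hr' hn x hx P' P hxP' hxP
    have hy_gP : g * x * g⁻¹ ∈ ((g • P : Sylow p (Equiv.Perm (Fin n))) :
        Subgroup (Equiv.Perm (Fin n))) := by
      have hset : g * x * g⁻¹ ∈ ((g • P : Sylow p (Equiv.Perm (Fin n))) :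
          Set (Equiv.Perm (Fin n))) := by
        rw [Sylow.coe_smul]
        exact ⟨x, hxP, rfl⟩
      exact hset
    have hcty : (g * x * g⁻¹).cycleType = Multiset.replicate a p := by
      rw [Equiv.Perm.cycleType_conj, hx]
    have hgPP : (g • P : Sylow p (Equiv.Perm (Fin n))) = P := by
      have := sylow_eq_of_mem ha' hr' hn _ hcty (g • P) P' hy_gP hyP'
      rw [this, hPP']
    exact Sylow.smul_eq_iff_mem_normalizer.1 hgPP
  · -- the normalizer of P is contained in the subnormaliser
    intro g hg
    apply Subgroup.subset_closure
    show Subgroup.IsSubnormalIn _ _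
    have hxH : x ∈ Subgroup.closure ({g, x} : Set (Equiv.Perm (Fin n))) :=
      Subgroup.subset_closure (by simp)
    have hgH : g ∈ Subgroup.closure ({g, x} : Set (Equiv.Perm (Fin n))) :=
      Subgroup.subset_closure (by simp)
    set H := Subgroup.closure ({g, x} : Set (Equiv.Perm (Fin n))) with hHdef
    set M := (P : Subgroup (Equiv.Perm (Fin n))) ⊓ H with hMdef
    have hMp : IsPGroup p M := P.2.to_le inf_le_left
    have hxM : x ∈ M := ⟨hxP, hxH⟩
    have hHnorm : H ≤ normalizer (M : Set (Equiv.Perm (Fin n))) := by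
      rw [hHdef]
      refine (Subgroup.closure_le _).2 ?_
      intro z hz
      rw [SetLike.mem_coe]
      have hzP : z ∈ normalizer ((P : Subgroup (Equiv.Perm (Fin n))) : Set (Equiv.Perm (Fin n))) := by
        rcases hz with rfl | hz
        · exact hg
        · rw [Set.mem_singleton_iff] at hz
          subst hz
          exact Subgroup.le_normalizer hxP
      have hzH : z ∈ normalizer (H : Set (Equiv.Perm (Fin n))) := Subgroup.le_normalizer (Subgroup.subset_closure hz)
      rw [Subgroup.mem_normalizer_iff] at hzP hzH ⊢
      intro h
      rw [hMdef]
      simp only [Subgroup.mem_inf]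
      exact and_congr (hzP h) (hzH h)
    have hsn1 : (Subgroup.zpowers x).IsSubnormalIn M :=
      IsSubnormalIn.of_le_pGroup hMp (Subgroup.zpowers_le.2 hxM)
    exact hsn1.append inf_le_right (_root_.normal_subgroupOf_of_le_normalizer inf_le_right hHnorm)
end Main
end

section
/- Let p be a prime and let n = a·p + r with natural numbers a, r satisfying 0 ≤ a ≤ p − 1 and 0 ≤ r ≤ p − 1. Let x be an element of the symmetric group S_n whose cycle type is (p)^k, and assume that either k ≤ a − 2, or (k = a − 1 and r ≥ 1). Then the subnormaliser of x in S_n is all of S_n: Sub_{S_n}(x) = S_n. -/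
section Helpers

variable {G : Type*} [Group G]

lemma Commute.mem_zpowers_normalizer {x g : G} (h : Commute x g) :
    g ∈ Subgroup.normalizer (Subgroup.zpowers x) := by
  rw [Subgroup.mem_normalizer_iff]
  intro y
  constructor
  · rintro ⟨n, rfl⟩
    have hc : Commute g (x ^ n) := h.symm.zpow_right n
    have he : g * x ^ n * g⁻¹ = x ^ n := by rw [hc.eq]; group
    exact Subgroup.mem_zpowers_iff.mpr ⟨n, he.symm⟩
  · intro hy
    obtain ⟨n, hn⟩ := Subgroup.mem_zpowers_iff.mp hy
    have hc : Commute (x ^ n) g⁻¹ := (h.zpow_left n).inv_right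
    have h2 : g⁻¹ * x ^ n * g = y := by rw [hn]; group
    have h3 : y = x ^ n := by rw [← h2, ← hc.eq]; group
    exact h3 ▸ Subgroup.mem_zpowers_iff.mpr ⟨n, rfl⟩

lemma mem_subnormaliser_of_normalizer {x g : G} (A : Subgroup G) (hxA : x ∈ A)
    (hA : A ≤ Subgroup.normalizer (Subgroup.zpowers x)) (hg : g ∈ Subgroup.normalizer A) :
    g ∈ subnormaliser x := by
  apply Subgroup.subset_closure
  set M := Subgroup.closure ({g, x} : Set G) with hM
  have hxM : x ∈ M := Subgroup.subset_closure (by simp)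
  have hgM : g ∈ M := Subgroup.subset_closure (by simp)
  have hMnormA : M ≤ Subgroup.normalizer A := by
    rw [hM, Subgroup.closure_le]
    rintro y (rfl | rfl)
    · exact hg
    · exact Subgroup.le_normalizer hxA
  refine ⟨2, fun i => if i = 0 then Subgroup.zpowers x else if i = 1 then A ⊓ M else M,
    rfl, rfl, ?_⟩
  intro i hi
  interval_cases i
  · simp only [if_pos rfl, Nat.one_ne_zero, if_neg, if_pos rfl, reduceIte]
    have hle : Subgroup.zpowers x ≤ A ⊓ M := le_inf (Subgroup.zpowers_le.mpr hxA)
      (Subgroup.zpowers_le.mpr hxM)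
    refine ⟨hle, (Subgroup.normal_subgroupOf_iff hle).mpr ?_⟩
    intro h k hh hk
    exact (Subgroup.mem_normalizer_iff.mp (hA (Subgroup.mem_inf.mp hk).1) h).mp hh
  · simp only [Nat.one_ne_zero, if_neg, reduceIte]
    refine ⟨inf_le_right, (Subgroup.normal_subgroupOf_iff inf_le_right).mpr ?_⟩
    intro h k hh hk
    rcases Subgroup.mem_inf.mp hh with ⟨hhA, hhM⟩
    refine Subgroup.mem_inf.mpr ⟨?_, ?_⟩
    · exact (Subgroup.mem_normalizer_iff.mp (hMnormA hk) h).mp hhA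
    · exact (Subgroup.mem_normalizer_iff.mp (Subgroup.le_normalizer hk) h).mp hhM

lemma Commute.mem_subnormaliser {x g : G} (h : Commute x g) : g ∈ subnormaliser x :=
  mem_subnormaliser_of_normalizer (Subgroup.zpowers x) (Subgroup.mem_zpowers x)
    Subgroup.le_normalizer h.mem_zpowers_normalizer

lemma mem_normalizer_closure_of_conj {S : Set G} {g : G}
    (h1 : ∀ s ∈ S, g * s * g⁻¹ ∈ Subgroup.closure S)
    (h2 : ∀ s ∈ S, g⁻¹ * s * g ∈ Subgroup.closure S) :
    g ∈ Subgroup.normalizer (Subgroup.closure S) := by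
  have key : ∀ (u : G), (∀ s ∈ S, u * s * u⁻¹ ∈ Subgroup.closure S) →
      ∀ h ∈ Subgroup.closure S, u * h * u⁻¹ ∈ Subgroup.closure S := by
    intro u hu h hh
    induction hh using Subgroup.closure_induction with
    | mem s hs => exact hu s hs
    | one => simpa using Subgroup.one_mem _
    | mul a b _ _ ha hb =>
        have : u * (a * b) * u⁻¹ = (u * a * u⁻¹) * (u * b * u⁻¹) := by group
        rw [this]; exact Subgroup.mul_mem _ ha hb
    | inv a _ ha =>
        have : u * a⁻¹ * u⁻¹ = (u * a * u⁻¹)⁻¹ := by group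
        rw [this]; exact Subgroup.inv_mem _ ha
  rw [Subgroup.mem_normalizer_iff]
  intro h
  constructor
  · exact fun hh => key g h1 h hh
  · intro hh
    have := key g⁻¹ (by simpa using h2) _ hh
    simpa [mul_assoc] using this

end Helpers

open Equiv Equiv.Perm in
/-- Proposition 5.1 (last case): let `p` be a prime, `n = a·p + r` with `a, r ≤ p - 1`,
and `x ∈ S_n` of cycle type `(p)^k` where `k ≤ a - 2`, or `k = a - 1` and `r ≥ 1`.
Then the subnormaliser of `x` is all of `S_n`. -/
theorem subnormaliser_perm_eq_top (p : ℕ) (hp : p.Prime) (a r n k : ℕ)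
    (ha : a ≤ p - 1) (hr : r ≤ p - 1) (hn : n = a * p + r)
    (x : Equiv.Perm (Fin n)) (hx : x.cycleType = Multiset.replicate k p)
    (hk : k ≤ a - 2 ∨ (k = a - 1 ∧ 1 ≤ r)) :
    subnormaliser x = ⊤ := by
  classical
  have hp2 := hp.two_le
  rcases Nat.eq_zero_or_pos k with hk0 | hkpos
  · subst hk0
    have hx1 : x = 1 := cycleType_eq_zero.mp (by simpa using hx)
    subst hx1
    rw [eq_top_iff]
    intro g _
    exact (Commute.one_left g).mem_subnormaliser
  have hsupp : x.support.card = k * p := by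
    rw [← Equiv.Perm.sum_cycleType, hx, Multiset.sum_replicate, smul_eq_mul]
  have hnk : k * p + p + 1 ≤ n := by
    rcases hk with h | ⟨h, hr1⟩
    · have h2 : k + 2 ≤ a := by omega
      have h3 : (k + 2) * p ≤ a * p := Nat.mul_le_mul_right p h2
      rw [add_mul] at h3
      nlinarith
    · have ha1 : a = k + 1 := by omega
      rw [ha1, add_mul, one_mul] at hn
      omega
  set F : Finset (Fin n) := x.supportᶜ with hF
  have hFcard : p + 1 ≤ F.card := by
    rw [hF, Finset.card_compl, Fintype.card_fin, hsupp]
    exact Nat.le_sub_of_add_le (by linarith)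
  have hFfix : ∀ z ∈ F, x z = z := fun z hz =>
    Equiv.Perm.notMem_support.mp (Finset.mem_compl.mp hz)
  obtain ⟨e, heF, hecard⟩ := Finset.exists_subset_card_eq
    (le_trans (Nat.le_succ p) hFcard)
  obtain ⟨w, hw⟩ : (F \ e).Nonempty := by
    rw [← Finset.card_pos, Finset.card_sdiff_of_subset heF, hecard]; omega
  have hwF : w ∈ F := (Finset.mem_sdiff.mp hw).1
  have hwe : w ∉ e := (Finset.mem_sdiff.mp hw).2
  have he_nsupp : ∀ z ∈ e, z ∉ x.support := fun z hz => Finset.mem_compl.mp (heF hz)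
  have he_fix : ∀ z ∈ e, x z = z := fun z hz =>
    Equiv.Perm.notMem_support.mp (he_nsupp z hz)
  -- The key construction: for each cycle `c` of `x`, an involution in the subnormaliser
  -- swapping the support of `c` with `e`.
  have main : ∀ c ∈ x.cycleFactorsFinset, ∃ τ : Equiv.Perm (Fin n),
      τ ∈ subnormaliser x ∧ (∀ z ∈ c.support, τ z ∈ e) ∧
      (∀ z, z ∉ c.support → z ∉ e → τ z = z) := by
    intro c hc
    have hcsub : c.support ⊆ x.support := mem_cycleFactorsFinset_support_le hc
    have hccard : c.support.card = p := by
      have hmem : c.support.card ∈ x.cycleType := by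
        rw [Equiv.Perm.cycleType_def]
        exact Multiset.mem_map.mpr ⟨c, Finset.mem_val.mpr hc, rfl⟩
      rw [hx] at hmem
      exact Multiset.eq_of_mem_replicate hmem
    have hdisj_se : ∀ z, z ∈ c.support → z ∉ e :=
      fun z hz hze => (he_nsupp z hze) (hcsub hz)
    set φ := Finset.equivOfCardEq (hccard.trans hecard.symm) with hφ
    set f : Fin n → Fin n := fun z =>
      if h : z ∈ c.support then (φ ⟨z, h⟩ : Fin n)
      else if h : z ∈ e then (φ.symm ⟨z, h⟩ : Fin n) else z with hfdef
    have hf_s : ∀ z (h : z ∈ c.support), f z = φ ⟨z, h⟩ := fun z h => dif_pos h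
    have hf_e : ∀ z (h : z ∈ e), f z = φ.symm ⟨z, h⟩ := by
      intro z h
      rw [hfdef]
      dsimp only
      rw [dif_neg (fun hs => hdisj_se z hs h), dif_pos h]
    have hf_o : ∀ z, z ∉ c.support → z ∉ e → f z = z := by
      intro z h1 h2
      rw [hfdef]
      dsimp only
      rw [dif_neg h1, dif_neg h2]
    have hinv : Function.Involutive f := by
      intro z
      by_cases h1 : z ∈ c.support
      · rw [hf_s z h1]
        have hm : ((φ ⟨z, h1⟩ : e) : Fin n) ∈ e := (φ ⟨z, h1⟩).2
        rw [hf_e _ hm]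
        simp only [Subtype.coe_eta, Equiv.symm_apply_apply]
      · by_cases h2 : z ∈ e
        · rw [hf_e z h2]
          have hm : ((φ.symm ⟨z, h2⟩ : c.support) : Fin n) ∈ c.support :=
            (φ.symm ⟨z, h2⟩).2
          rw [hf_s _ hm]
          simp only [Subtype.coe_eta, Equiv.apply_symm_apply]
        · rw [hf_o z h1 h2, hf_o z h1 h2]
    set τ := Function.Involutive.toPerm f hinv with hτdef
    have hτ : ∀ z, τ z = f z := fun z => rfl
    have hττ : τ * τ = 1 := Equiv.ext fun z => hinv z
    have hτinv : τ⁻¹ = τ := (inv_eq_of_mul_eq_one_right hττ).symm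
    have hτ_s : ∀ z ∈ c.support, τ z ∈ e := fun z hz => by
      rw [hτ, hf_s z hz]; exact (φ ⟨z, hz⟩).2
    have hτ_o : ∀ z, z ∉ c.support → z ∉ e → τ z = z := fun z h1 h2 => by
      rw [hτ, hf_o z h1 h2]
    set d := τ * c * τ⁻¹ with hd
    have hd_fix : ∀ z, z ∉ e → d z = z := by
      intro z hz
      rw [hd, hτinv]
      by_cases h1 : z ∈ c.support
      · have h2 : τ z ∈ e := hτ_s z h1
        have h3 : c (τ z) = τ z :=
          Equiv.Perm.notMem_support.mp (fun hs => hdisj_se _ hs h2)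
        show τ (c (τ z)) = z
        rw [h3]
        exact hinv z
      · have h2 : τ z = z := hτ_o z h1 hz
        show τ (c (τ z)) = z
        rw [h2, Equiv.Perm.notMem_support.mp h1, h2]
    have hd_x : Commute x d :=
      Equiv.Perm.Disjoint.commute (fun z =>
        if hz : z ∈ e then Or.inl (he_fix z hz) else Or.inr (hd_fix z hz))
    set A := Subgroup.closure
      (insert d (↑x.cycleFactorsFinset : Set (Equiv.Perm (Fin n)))) with hA
    have hmemA : ∀ c' ∈ x.cycleFactorsFinset, c' ∈ A := fun c' hc' =>
      Subgroup.subset_closure (Set.mem_insert_iff.mpr (Or.inr (by exact_mod_cast hc')))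
    have hdA : d ∈ A := Subgroup.subset_closure (Set.mem_insert _ _)
    have hxA : x ∈ A := by
      rw [← Equiv.Perm.cycleFactorsFinset_noncommProd x]
      exact Subgroup.noncommProd_mem A _ (fun c' hc' => hmemA c' hc')
    have hAnorm : A ≤ Subgroup.normalizer (Subgroup.zpowers x) := by
      rw [hA, Subgroup.closure_le]
      rintro g hg
      rcases Set.mem_insert_iff.mp hg with rfl | hg'
      · exact hd_x.mem_zpowers_normalizer
      · exact (Equiv.Perm.self_mem_cycle_factors_commute
          (by exact_mod_cast hg')).symm.mem_zpowers_normalizer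
    have hconj : ∀ s ∈ (insert d (↑x.cycleFactorsFinset : Set (Equiv.Perm (Fin n)))),
        τ * s * τ⁻¹ ∈ A := by
      rintro s hs
      rcases Set.mem_insert_iff.mp hs with rfl | hs'
      · have hcalc : τ * (τ * c * τ⁻¹) * τ⁻¹ = (τ * τ) * c * (τ * τ)⁻¹ := by group
        rw [hd, hcalc, hττ]
        simpa using hmemA c hc
      · by_cases hcc : s = c
        · subst hcc
          rw [← hd]
          exact hdA
        · have hsf : s ∈ x.cycleFactorsFinset := by exact_mod_cast hs'
          have hdd : Equiv.Perm.Disjoint s c :=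
            Equiv.Perm.cycleFactorsFinset_pairwise_disjoint x
              (by exact_mod_cast hs') (by exact_mod_cast hc) hcc
          have hdisj' : Equiv.Perm.Disjoint τ s := by
            intro z
            by_cases hzs : z ∈ s.support
            · left
              apply hτ_o
              · exact Finset.disjoint_left.mp hdd.disjoint_support hzs
              · exact fun hze =>
                  he_nsupp z hze (mem_cycleFactorsFinset_support_le hsf hzs)
            · right
              exact Equiv.Perm.notMem_support.mp hzs
          have : τ * s * τ⁻¹ = s := by
            rw [hdisj'.commute.eq]; group
          rw [this]
          exact hmemA s hsf
    have hτnorm : τ ∈ Subgroup.normalizer A := by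
      rw [hA]
      apply mem_normalizer_closure_of_conj
      · exact fun s hs => hconj s hs
      · intro s hs
        have := hconj s hs
        rw [hτinv] at this ⊢
        exact this
    exact ⟨τ, mem_subnormaliser_of_normalizer A hxA hAnorm hτnorm, hτ_s, hτ_o⟩
  -- swaps of two fixed points
  have swapF : ∀ u v : Fin n, u ∈ F → v ∈ F → Equiv.swap u v ∈ subnormaliser x := by
    intro u v hu hv
    apply Commute.mem_subnormaliser
    apply Equiv.Perm.Disjoint.commute
    intro z
    by_cases hz : z = u ∨ z = v
    · left
      rcases hz with rfl | rfl
      · exact hFfix z hu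
      · exact hFfix z hv
    · right
      push_neg at hz
      exact Equiv.swap_apply_of_ne_of_ne hz.1 hz.2
  -- swaps of a support point and a fixed point outside `e`
  have swapS : ∀ u ∈ x.support, ∀ v ∈ F, v ∉ e → Equiv.swap u v ∈ subnormaliser x := by
    intro u hu v hv hve
    have hc : x.cycleOf u ∈ x.cycleFactorsFinset :=
      cycleOf_mem_cycleFactorsFinset_iff.mpr hu
    have hu' : u ∈ (x.cycleOf u).support :=
      mem_support_cycleOf_iff.mpr ⟨Equiv.Perm.SameCycle.refl x u, hu⟩
    obtain ⟨τ, hτSub, hτ1, hτ2⟩ := main (x.cycleOf u) hc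
    have h1 : τ u ∈ e := hτ1 u hu'
    have h1F : τ u ∈ F := heF h1
    have hvnc : v ∉ (x.cycleOf u).support := fun hvc =>
      Finset.mem_compl.mp hv (mem_cycleFactorsFinset_support_le hc hvc)
    have h2 : τ v = v := hτ2 v hvnc hve
    have hkey := Equiv.swap_apply_apply τ u v
    have hrw : Equiv.swap u v = τ⁻¹ * Equiv.swap (τ u) (τ v) * τ := by
      rw [hkey]; group
    rw [hrw]
    exact Subgroup.mul_mem _ (Subgroup.mul_mem _ (Subgroup.inv_mem _ hτSub)
      (swapF _ _ h1F (by rw [h2]; exact hv))) hτSub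
  -- the three-swap conjugation identity
  have tri : ∀ u v w' : Fin n, u ≠ v → u ≠ w' →
      Equiv.swap u v = Equiv.swap v w' * Equiv.swap u w' * (Equiv.swap v w')⁻¹ := by
    intro u v w' h1 h2
    have := Equiv.swap_apply_apply (Equiv.swap v w') u w'
    rw [Equiv.swap_apply_of_ne_of_ne h1 h2, Equiv.swap_apply_right] at this
    exact this
  -- swaps of a support point and any fixed point
  have swapSF : ∀ u ∈ x.support, ∀ v ∈ F, Equiv.swap u v ∈ subnormaliser x := by
    intro u hu v hv
    by_cases hve : v ∈ e
    · have hunv : u ≠ v := fun h => Finset.mem_compl.mp hv (h ▸ hu)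
      have hunw : u ≠ w := fun h => Finset.mem_compl.mp hwF (h ▸ hu)
      rw [tri u v w hunv hunw]
      exact Subgroup.mul_mem _ (Subgroup.mul_mem _ (swapF v w (heF hve) hwF)
        (swapS u hu w hwF hwe)) (Subgroup.inv_mem _ (swapF v w (heF hve) hwF))
    · exact swapS u hu v hv hve
  -- all swaps
  have swapAll : ∀ u v : Fin n, Equiv.swap u v ∈ subnormaliser x := by
    intro u v
    by_cases huv : u = v
    · rw [huv, Equiv.swap_self]
      exact Subgroup.one_mem _
    by_cases hu : u ∈ x.support <;> by_cases hv : v ∈ x.support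
    · have hunw : u ≠ w := fun h => Finset.mem_compl.mp hwF (h ▸ hu)
      rw [tri u v w huv hunw]
      exact Subgroup.mul_mem _ (Subgroup.mul_mem _ (swapSF v hv w hwF)
        (swapSF u hu w hwF)) (Subgroup.inv_mem _ (swapSF v hv w hwF))
    · exact swapSF u hu v (Finset.mem_compl.mpr hv)
    · rw [Equiv.swap_comm]
      exact swapSF v hv u (Finset.mem_compl.mpr hu)
    · exact swapF u v (Finset.mem_compl.mpr hu) (Finset.mem_compl.mpr hv)
  rw [eq_top_iff, ← Equiv.Perm.closure_isSwap]
  rw [Subgroup.closure_le]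
  rintro σ ⟨u, v, hne, rfl⟩
  exact swapAll u v
end

section
/- Let p be a prime and let n = a·p + r with natural numbers a, r satisfying 0 ≤ a ≤ p − 1 and 0 ≤ r ≤ p − 1. Let P be a Sylow p-subgroup of the symmetric group S_n. Then the normaliser of P in S_n has cardinality |N_{S_n}(P)| = p^a · (p − 1)^a · a! · r!. (The normaliser is the group (C_p ⋊ C_{p−1}) ≀ S_a × S_r.) -/
open Equiv

namespace SylowPermAux

variable (p a r : ℕ) [hp : Fact p.Prime]

/-- The set on which we model `S_n` for `n = a*p + r`. -/
abbrev Ω := (Fin a × ZMod p) ⊕ Fin r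

/-- Translation permutations: the generic element of the concrete Sylow subgroup. -/
def tau (v : Fin a → ZMod p) : Equiv.Perm (Ω p a r) :=
  Equiv.sumCongr (Equiv.prodShear (Equiv.refl (Fin a)) (fun i => Equiv.addLeft (v i)))
    (Equiv.refl _)

@[simp] theorem tau_inl (v : Fin a → ZMod p) (i : Fin a) (x : ZMod p) :
    tau p a r v (Sum.inl (i, x)) = Sum.inl (i, v i + x) := rfl

@[simp] theorem tau_inr (v : Fin a → ZMod p) (j : Fin r) :
    tau p a r v (Sum.inr j) = Sum.inr j := rfl

theorem tau_mul (v w : Fin a → ZMod p) :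
    tau p a r v * tau p a r w = tau p a r (v + w) := by
  ext z
  rcases z with ⟨i, x⟩ | j
  · simp [Perm.mul_apply, add_assoc]
  · simp [Perm.mul_apply]

theorem tau_injective : Function.Injective (tau p a r) := by
  intro v w h
  funext i
  have := congrArg (fun σ : Perm (Ω p a r) => σ (Sum.inl (i, 0))) h
  simpa using this

/-- The concrete Sylow `p`-subgroup of `Perm (Ω p a r)`. -/
def P0 : Subgroup (Perm (Ω p a r)) where
  carrier := Set.range (tau p a r)
  one_mem' := ⟨0, by ext z; rcases z with ⟨i, x⟩ | j <;> simp⟩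
  mul_mem' := by
    rintro σ τ ⟨v, rfl⟩ ⟨w, rfl⟩
    exact ⟨v + w, (tau_mul p a r v w).symm⟩
  inv_mem' := by
    rintro σ ⟨v, rfl⟩
    refine ⟨-v, ?_⟩
    rw [eq_inv_iff_mul_eq_one, tau_mul]
    ext z; rcases z with ⟨i, x⟩ | j <;> simp

theorem card_P0 : Nat.card (P0 p a r) = p ^ a := by
  have : Nat.card (P0 p a r) = Nat.card (Fin a → ZMod p) := by
    apply Nat.card_congr
    exact (Equiv.ofInjective _ (tau_injective p a r)).symm
  rw [this]
  simp [Nat.card_eq_fintype_card, ZMod.card]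

/-- Affine bijections of `ZMod p`. -/
def aff (b : ZMod p) (c : (ZMod p)ˣ) : ZMod p ≃ ZMod p :=
  (Equiv.mulLeft₀ (c : ZMod p) c.ne_zero).trans (Equiv.addLeft b)

/-- The generic element of the normaliser of `P0`. -/
def phi (f : Fin a → ZMod p × (ZMod p)ˣ) (g : Perm (Fin a)) (π : Perm (Fin r)) :
    Perm (Ω p a r) :=
  Equiv.sumCongr (Equiv.prodShear g (fun i => aff p (f (g i)).1 (f (g i)).2)) π

@[simp] theorem phi_inl (f : Fin a → ZMod p × (ZMod p)ˣ) (g : Perm (Fin a))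
    (π : Perm (Fin r)) (i : Fin a) (x : ZMod p) :
    phi p a r f g π (Sum.inl (i, x)) = Sum.inl (g i, (f (g i)).1 + (f (g i)).2 * x) := rfl

@[simp] theorem phi_inr (f : Fin a → ZMod p × (ZMod p)ˣ) (g : Perm (Fin a))
    (π : Perm (Fin r)) (j : Fin r) :
    phi p a r f g π (Sum.inr j) = Sum.inr (π j) := rfl

theorem phi_injective2 {f f' : Fin a → ZMod p × (ZMod p)ˣ} {g g' : Perm (Fin a)}
    {π π' : Perm (Fin r)} (h : phi p a r f g π = phi p a r f' g' π') :
    f = f' ∧ g = g' ∧ π = π' := by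
  have happ : ∀ z, phi p a r f g π z = phi p a r f' g' π' z := fun z => by rw [h]
  have hg : g = g' := Equiv.ext fun i => by
    have := happ (Sum.inl (i, 0)); simp at this; exact this.1
  subst hg
  have hπ : π = π' := Equiv.ext fun j => by
    have := happ (Sum.inr j); simpa using this
  refine ⟨?_, rfl, hπ⟩
  funext i
  obtain ⟨i₀, rfl⟩ := g.surjective i
  have h0 := happ (Sum.inl (i₀, 0))
  have h1 := happ (Sum.inl (i₀, 1))
  simp at h0 h1
  have hb : (f (g i₀)).1 = (f' (g i₀)).1 := h0
  have hc : ((f (g i₀)).2 : ZMod p) = ((f' (g i₀)).2 : ZMod p) := by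
    have := h1
    rw [hb] at this
    exact add_left_cancel this
  exact Prod.ext hb (Units.ext hc)

theorem conj_tau (f : Fin a → ZMod p × (ZMod p)ˣ) (g : Perm (Fin a)) (π : Perm (Fin r))
    (v : Fin a → ZMod p) :
    phi p a r f g π * tau p a r v * (phi p a r f g π)⁻¹ =
      tau p a r (fun j => ((f j).2 : ZMod p) * v (g⁻¹ j)) := by
  have key : phi p a r f g π * tau p a r v =
      tau p a r (fun j => ((f j).2 : ZMod p) * v (g⁻¹ j)) * phi p a r f g π := by
    ext z
    rcases z with ⟨i, x⟩ | j
    · simp only [Perm.mul_apply, tau_inl, phi_inl, Perm.inv_def, Equiv.symm_apply_apply]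
      congr 1
      ext
      · rfl
      · ring
    · simp [Perm.mul_apply]
  rw [key, mul_assoc, mul_inv_cancel, mul_one]

theorem phi_mem_normalizer (f : Fin a → ZMod p × (ZMod p)ˣ) (g : Perm (Fin a))
    (π : Perm (Fin r)) : phi p a r f g π ∈ (Subgroup.normalizer (P0 p a r : Set (Perm (Ω p a r)))) := by
  rw [Subgroup.mem_normalizer_iff]
  intro h
  constructor
  · rintro ⟨v, rfl⟩
    exact ⟨_, (conj_tau p a r f g π v).symm⟩
  · rintro ⟨u, hu⟩
    set u' : Fin a → ZMod p := fun j => (((f (g j)).2⁻¹ : (ZMod p)ˣ) : ZMod p) * u (g j)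
      with hu'
    have key := conj_tau p a r f g π u'
    have e2 : (fun j => ((f j).2 : ZMod p) * u' (g⁻¹ j)) = u := by
      funext j
      simp only [hu', Perm.inv_def, Equiv.apply_symm_apply, Units.mul_inv_cancel_left]
    rw [e2, hu] at key
    exact ⟨u', mul_left_cancel (mul_right_cancel key)⟩

theorem zmod_const {β : Type*} (k : ZMod p → β) (h : ∀ x, k (1 + x) = k x) (x : ZMod p) :
    k x = k 0 := by
  have hn : ∀ m : ℕ, k (m : ZMod p) = k 0 := by
    intro m
    induction m with
    | zero => simp
    | succ m ih =>
      have : ((m + 1 : ℕ) : ZMod p) = 1 + (m : ZMod p) := by push_cast; ring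
      rw [this, h, ih]
  conv_lhs => rw [← ZMod.natCast_zmod_val x]
  exact hn _

theorem zmod_affine (k : ZMod p → ZMod p) (c : ZMod p) (h : ∀ x, k (1 + x) = c + k x)
    (x : ZMod p) : k x = k 0 + x * c := by
  have hn : ∀ m : ℕ, k (m : ZMod p) = k 0 + (m : ZMod p) * c := by
    intro m
    induction m with
    | zero => simp
    | succ m ih =>
      have e : ((m + 1 : ℕ) : ZMod p) = 1 + (m : ZMod p) := by push_cast; ring
      rw [e, h, ih]
      ring
  conv_lhs => rw [← ZMod.natCast_zmod_val x]
  rw [hn, ZMod.natCast_zmod_val]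

theorem inr_aux {σ : Perm (Ω p a r)} (hσ : σ ∈ (Subgroup.normalizer (P0 p a r : Set (Perm (Ω p a r))))) (j : Fin r)
    (i : Fin a) (x : ZMod p) : σ (Sum.inr j) ≠ Sum.inl (i, x) := by
  intro hcon
  have hσi : σ⁻¹ ∈ (Subgroup.normalizer (P0 p a r : Set (Perm (Ω p a r)))) := (Subgroup.normalizer (P0 p a r : Set (Perm (Ω p a r)))).inv_mem hσ
  obtain ⟨w, hw⟩ := (Subgroup.mem_normalizer_iff.mp hσi (tau p a r (Pi.single i 1))).mp
    ⟨Pi.single i 1, rfl⟩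
  rw [inv_inv] at hw
  have key : σ * tau p a r w = tau p a r (Pi.single i 1) * σ := by rw [hw]; group
  have h2 := DFunLike.congr_fun key (Sum.inr j)
  simp only [Perm.mul_apply, tau_inr] at h2
  rw [hcon, tau_inl, Pi.single_eq_same] at h2
  have : x = 1 + x := congrArg Prod.snd (Sum.inl.inj h2)
  rw [right_eq_add] at this
  exact one_ne_zero this

theorem normalizer_sub {σ : Perm (Ω p a r)} (hσ : σ ∈ (Subgroup.normalizer (P0 p a r : Set (Perm (Ω p a r))))) :
    ∃ f g π, σ = phi p a r f g π := by
  have hσi : σ⁻¹ ∈ (Subgroup.normalizer (P0 p a r : Set (Perm (Ω p a r)))) := (Subgroup.normalizer (P0 p a r : Set (Perm (Ω p a r)))).inv_mem hσ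
  have conj : ∀ v : Fin a → ZMod p, ∃ w, ∀ z, σ (tau p a r v z) = tau p a r w (σ z) := by
    intro v
    obtain ⟨w, hw⟩ := (Subgroup.mem_normalizer_iff.mp hσ (tau p a r v)).mp ⟨v, rfl⟩
    refine ⟨w, fun z => ?_⟩
    have key : σ * tau p a r v = tau p a r w * σ := by rw [hw]; group
    have := DFunLike.congr_fun key z
    simpa [Perm.mul_apply] using this
  have hfix : ∀ j, ∃ j', σ (Sum.inr j) = Sum.inr j' := by
    intro j
    rcases h : σ (Sum.inr j) with ⟨i, x⟩ | j'
    · exact absurd h (inr_aux p a r hσ j i x)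
    · exact ⟨j', rfl⟩
  have hblk : ∀ (i : Fin a) (x : ZMod p), ∃ k y, σ (Sum.inl (i, x)) = Sum.inl (k, y) := by
    intro i x
    rcases h : σ (Sum.inl (i, x)) with ⟨k, y⟩ | j
    · exact ⟨k, y, rfl⟩
    · exfalso
      have h' : σ⁻¹ (Sum.inr j) = Sum.inl (i, x) := by rw [← h]; simp
      exact inr_aux p a r hσi j i x h'
  choose K Y hKY using hblk
  choose J hJ using hfix
  have hstep : ∀ i : Fin a, ∃ c : ZMod p,
      (∀ x, K i x = K i 0) ∧ (∀ x, Y i x = Y i 0 + x * c) := by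
    intro i
    obtain ⟨w, hw⟩ := conj (Pi.single i 1)
    have hrel : ∀ x : ZMod p, K i (1 + x) = K i x ∧ Y i (1 + x) = w (K i x) + Y i x := by
      intro x
      have := hw (Sum.inl (i, x))
      rw [tau_inl, Pi.single_eq_same, hKY i (1 + x), hKY i x, tau_inl] at this
      have h1 := Sum.inl.inj this
      exact ⟨congrArg Prod.fst h1, congrArg Prod.snd h1⟩
    have hKc : ∀ x, K i x = K i 0 := zmod_const p (K i) (fun x => (hrel x).1)
    refine ⟨w (K i 0), hKc, ?_⟩
    apply zmod_affine
    intro x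
    have := (hrel x).2
    rwa [hKc x] at this
  choose c hKconst hYaff using hstep
  have hc : ∀ i, c i ≠ 0 := by
    intro i h0
    have h1 : σ (Sum.inl (i, 1)) = σ (Sum.inl (i, 0)) := by
      rw [hKY i 1, hKY i 0, hKconst i 1, hYaff i 1, hYaff i 0, h0]
      simp
    have h2 := σ.injective h1
    have h3 : (1 : ZMod p) = 0 := congrArg Prod.snd (Sum.inl.inj h2)
    exact one_ne_zero h3
  have hginj : Function.Injective (fun i => K i 0) := by
    intro i i' hii
    simp only at hii
    have hx : σ (Sum.inl (i, (Y i' 0 - Y i 0) / c i)) = σ (Sum.inl (i', 0)) := by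
      rw [hKY, hKY, hKconst i, hYaff i, hYaff i' 0, hii]
      congr 2
      rw [div_mul_cancel₀ _ (hc i)]
      ring
    have := σ.injective hx
    exact congrArg Prod.fst (Sum.inl.inj this)
  have hJinj : Function.Injective J := by
    intro j j' h
    have : σ (Sum.inr j) = σ (Sum.inr j') := by rw [hJ j, hJ j', h]
    exact Sum.inr.inj (σ.injective this)
  let g : Perm (Fin a) := Equiv.ofBijective _ (Finite.injective_iff_bijective.mp hginj)
  let π : Perm (Fin r) := Equiv.ofBijective _ (Finite.injective_iff_bijective.mp hJinj)
  have hg : ∀ i, g i = K i 0 := fun i => rfl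
  have hπ : ∀ j, π j = J j := fun j => rfl
  refine ⟨fun j => (Y (g.symm j) 0, Units.mk0 (c (g.symm j)) (hc _)), g, π, ?_⟩
  ext z
  rcases z with ⟨i, x⟩ | j
  · rw [hKY i x, hKconst i x, hYaff i x, phi_inl]
    have hsymm : g.symm (g i) = i := g.symm_apply_apply i
    rw [hg i, ← hg i]
    simp only [hsymm, Units.val_mk0]
    congr 1
    exact Prod.ext rfl (by ring)
  · rw [hJ j, phi_inr, hπ j]

/-- The count of the normaliser of the concrete Sylow subgroup. -/
theorem card_normalizer_P0 :
    Nat.card ((Subgroup.normalizer (P0 p a r : Set (Perm (Ω p a r))))) =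
      p ^ a * (p - 1) ^ a * a.factorial * r.factorial := by
  have hb : Function.Bijective
      (fun t : (Fin a → ZMod p × (ZMod p)ˣ) × Perm (Fin a) × Perm (Fin r) =>
        (⟨phi p a r t.1 t.2.1 t.2.2, phi_mem_normalizer p a r t.1 t.2.1 t.2.2⟩ :
          (Subgroup.normalizer (P0 p a r : Set (Perm (Ω p a r)))))) := by
    constructor
    · rintro ⟨f, g, π⟩ ⟨f', g', π'⟩ h
      have h' := Subtype.ext_iff.mp h
      obtain ⟨h1, h2, h3⟩ := phi_injective2 p a r h'
      exact Prod.ext h1 (Prod.ext h2 h3)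
    · rintro ⟨σ, hσ⟩
      obtain ⟨f, g, π, rfl⟩ := normalizer_sub p a r hσ
      exact ⟨(f, g, π), rfl⟩
  have := Nat.card_congr (Equiv.ofBijective _ hb)
  rw [← this]
  have h2 := hp.out.two_le
  simp only [Nat.card_eq_fintype_card, Fintype.card_prod, Fintype.card_fun,
    Fintype.card_perm, Fintype.card_fin, ZMod.card,
    ZMod.card_units_eq_totient, Nat.totient_prime hp.out]
  ring

theorem factorization_aux (ha : a ≤ p - 1) (hr : r ≤ p - 1) :
    (a * p + r).factorial.factorization p = a := by
  have h2 := hp.out.two_le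
  have hrp : r < p := by omega
  rw [Nat.factorization_def _ hp.out, show a * p + r = p * a + r by ring,
    padicValNat_factorial_mul_add a hrp, padicValNat_factorial_mul]
  have h0 : padicValNat p a.factorial = 0 := by
    apply padicValNat.eq_zero_of_not_dvd
    intro hdvd
    have := (Nat.Prime.dvd_factorial hp.out).mp hdvd
    omega
  rw [h0, zero_add]

theorem card_perm_Ω : Nat.card (Perm (Ω p a r)) = (a * p + r).factorial := by
  rw [Nat.card_eq_fintype_card, Fintype.card_perm]
  congr 1
  simp [ZMod.card, mul_comm]

/-- `Equiv.permCongr` as a `MulEquiv`. -/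
def permMulEquiv {α β : Type*} (e : α ≃ β) : Perm α ≃* Perm β where
  toEquiv := e.permCongr
  map_mul' := fun σ τ => Equiv.ext fun x => by
    simp [Equiv.permCongr_apply, Perm.mul_apply]

end SylowPermAux

open SylowPermAux

/-- For a prime `p` and `n = a·p + r` with `a, r ≤ p - 1`, the normaliser of a Sylow
`p`-subgroup of the symmetric group `S_n` has order `p^a * (p-1)^a * a! * r!`. -/
theorem card_normalizer_sylow_perm (p : ℕ) (hp : p.Prime) (a r n : ℕ)
    (ha : a ≤ p - 1) (hr : r ≤ p - 1) (hn : n = a * p + r)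
    (P : Sylow p (Equiv.Perm (Fin n))) :
    Nat.card (Subgroup.normalizer ((P : Subgroup (Equiv.Perm (Fin n))) : Set (Equiv.Perm (Fin n)))) =
      p ^ a * (p - 1) ^ a * a.factorial * r.factorial := by
  haveI : Fact p.Prime := ⟨hp⟩
  have hcardΩ : Fintype.card (Ω p a r) = n := by
    simp [ZMod.card, hn, mul_comm]
  let e : Fin n ≃ Ω p a r := Fintype.equivOfCardEq (by simp [hcardΩ])
  let ψ : Equiv.Perm (Fin n) ≃* Perm (Ω p a r) := permMulEquiv e
  let Q : Subgroup (Perm (Ω p a r)) := Subgroup.map ψ.toMonoidHom (P : Subgroup _)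
  have hmult : (Nat.card (Perm (Ω p a r))).factorization p = a := by
    rw [card_perm_Ω, factorization_aux p a r ha hr]
  have hcardP0 : Nat.card (P0 p a r) = p ^ (Nat.card (Perm (Ω p a r))).factorization p := by
    rw [hmult, card_P0]
  have hcardGn : Nat.card (Equiv.Perm (Fin n)) = Nat.card (Perm (Ω p a r)) := by
    rw [Nat.card_eq_fintype_card, Nat.card_eq_fintype_card, Fintype.card_perm,
      Fintype.card_perm, Fintype.card_fin, hcardΩ]
  have hcardQ : Nat.card Q = p ^ (Nat.card (Perm (Ω p a r))).factorization p := by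
    have h1 : Nat.card Q = Nat.card (P : Subgroup (Equiv.Perm (Fin n))) :=
      (Nat.card_congr
        (Subgroup.equivMapOfInjective _ ψ.toMonoidHom ψ.injective).toEquiv).symm
    rw [h1, Sylow.card_eq_multiplicity P, hcardGn]
  let P0S : Sylow p (Perm (Ω p a r)) := Sylow.ofCard (P0 p a r) hcardP0
  let QS : Sylow p (Perm (Ω p a r)) := Sylow.ofCard Q hcardQ
  obtain ⟨g, hg⟩ := MulAction.exists_smul_eq (Perm (Ω p a r)) QS P0S
  have hsub : Subgroup.map (MulAut.conj g).toMonoidHom Q = P0 p a r := by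
    have h1 : ((g • QS : Sylow p _) : Subgroup _) =
        Subgroup.map (MulAut.conj g).toMonoidHom Q := rfl
    rw [← h1, hg]
    rfl
  -- step 1 : transport along ψ
  have step1 : Nat.card (Subgroup.normalizer ((P : Subgroup (Equiv.Perm (Fin n))) : Set (Equiv.Perm (Fin n)))) =
      Nat.card (Subgroup.normalizer (Q : Set (Perm (Ω p a r)))) := by
    have h1 := Subgroup.map_equiv_normalizer_eq (P : Subgroup (Equiv.Perm (Fin n))) ψ
    rw [← h1]
    exact Nat.card_congr
      (Subgroup.equivMapOfInjective _ ψ.toMonoidHom ψ.injective).toEquiv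
  -- step 2 : transport along conjugation by g
  have step2 : Nat.card (Subgroup.normalizer (Q : Set (Perm (Ω p a r)))) = Nat.card ((Subgroup.normalizer (P0 p a r : Set (Perm (Ω p a r))))) := by
    have h1 := Subgroup.map_equiv_normalizer_eq Q (MulAut.conj g)
    rw [hsub] at h1
    rw [← h1]
    exact Nat.card_congr
      (Subgroup.equivMapOfInjective _ (MulAut.conj g).toMonoidHom
        (MulAut.conj g).injective).toEquiv
  rw [step1, step2, card_normalizer_P0]
end
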